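/- arXiv:1011.1377 — 7 statements merged into one kernel-verified Lean document; each statement's English description precedes it below -/
import Mathlib

section
/- Let a regular linear network error correction code over a finite field F with information rate w be given on a network G, and let t be a sink node with 1 ≤ w ≤ C_t. Let {e_1, e_2, ..., e_{C_t}} be a minimum cut between s and t, indexed in an upstream-to-downstream order (i.e., for i < j there is no path starting with the channel e_j that contains the channel e_i), and let ρ = {e_w, e_{w+1}, ..., e_{C_t}}. Then Δ(t,ρ) ∩ Φ(t) ≠ {0}. -/
open scoped BigOperators

/-- Consecutive channels in the list match head-to-tail. -/
def ChainsTo {E V : Type} (tl hd : E → V) (p : List E) : Prop :=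
  List.Chain' (fun a b => hd a = tl b) p

/-- `p` is a (nonempty) path from node `i` to node `t`. -/
def IsPathBetween {E V : Type} (tl hd : E → V) (i t : V) (p : List E) : Prop :=
  ChainsTo tl hd p ∧ (∃ e ∈ p.head?, tl e = i) ∧ (∃ e ∈ p.getLast?, hd e = t)

/-- `C` is a cut between `i` and `t`: every path from `i` to `t` meets `C`. -/
def IsCut {E V : Type} (tl hd : E → V) (i t : V) (C : Finset E) : Prop :=
  ∀ p : List E, IsPathBetween tl hd i t p → ∃ e ∈ p, e ∈ C

/-- The minimum cut capacity between `i` and `t`. -/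
noncomputable def minCutGen {E V : Type} (tl hd : E → V) (i t : V) : ℕ :=
  sInf {n | ∃ C : Finset E, IsCut tl hd i t C ∧ C.card = n}

/-- A single-source finite acyclic directed multigraph network. -/
structure Network where
  V : Type
  E : Type
  [fintV : Fintype V]
  [fintE : Fintype E]
  [decV : DecidableEq V]
  [decE : DecidableEq E]
  tl : E → V
  hd : E → V
  s : V
  T : Finset V
  s_not_sink : s ∉ T
  source_no_in : ∀ e, hd e ≠ s
  sink_no_out : ∀ e, tl e ∉ T
  acyclic : ∀ p : List E, ChainsTo tl hd p →
    ∀ e ∈ p.head?, ∀ e' ∈ p.getLast?, hd e' ≠ tl e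

attribute [instance] Network.fintV Network.fintE Network.decV Network.decE

namespace Network

/-- The minimum cut capacity `C_t` between the source `s` and `t`. -/
noncomputable def minCut (G : Network) (t : G.V) : ℕ :=
  minCutGen G.tl G.hd G.s t

/-- `rank_t(ρ)`: the minimum cut capacity between the new node `s_ρ` (= `none`) and `t`
in the network where every channel of `ρ` is redirected to start at `s_ρ`. -/
noncomputable def rankOf (G : Network) (t : G.V) (ρ : Finset G.E) : ℕ :=
  minCutGen (fun e => if e ∈ ρ then (none : Option G.V) else some (G.tl e))
    (fun e => some (G.hd e)) (none : Option G.V) (some t)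

/-- `R_t(b)`: the set of error patterns `ρ` with `|ρ| = rank_t(ρ) = b`. -/
def R (G : Network) (t : G.V) (b : ℕ) : Set (Finset G.E) :=
  {ρ | ρ.card = b ∧ G.rankOf t ρ = b}

/-- `E_t`: the set of channels connective with `t`, i.e. from which a path ends at `t`. -/
def Econn (G : Network) (t : G.V) : Set G.E :=
  {e | ∃ p : List G.E, ChainsTo G.tl G.hd p ∧ p.head? = some e ∧
        ∃ e' ∈ p.getLast?, G.hd e' = t}

/-- `|J|`: the number of internal nodes. -/
noncomputable def internalCard (G : Network) : ℕ :=
  (Finset.univ \ insert G.s G.T).card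

end Network

/-- A linear network error correction code for information rate `w`: local encoding
coefficients together with the extended global encoding kernels `f`, which satisfy the
defining recursion.  The coordinates of the kernels are indexed by `In(s) ∪ E`,
where `In(s)` consists of the `w` imaginary message channels. -/
structure NECCode (G : Network) (F : Type) [Field F] (w : ℕ) where
  k : G.E → G.E → F
  ksrc : Fin w → G.E → F
  f : G.E → (Fin w ⊕ G.E) → F
  f_eq : ∀ e : G.E,
    f e = (∑ d ∈ Finset.univ.filter (fun d => G.hd d = G.tl e), k d e • f d)
      + (if G.tl e = G.s then
          ∑ i : Fin w, ksrc i e • (Pi.single (Sum.inl i) (1 : F) : (Fin w ⊕ G.E) → F)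
         else 0)
      + (Pi.single (Sum.inr e) (1 : F) : (Fin w ⊕ G.E) → F)

namespace NECCode

variable {G : Network} {F : Type} [Field F] {w : ℕ}

/-- `row_t(d)`: the row of the decoding matrix `F̃_t` indexed by `d ∈ In(s) ∪ E`. -/
def rowt (C : NECCode G F w) (t : G.V) (d : Fin w ⊕ G.E) : {e : G.E // G.hd e = t} → F :=
  fun e => C.f e.1 d

/-- The message space `Φ(t)`. -/
def Phi (C : NECCode G F w) (t : G.V) : Submodule F ({e : G.E // G.hd e = t} → F) :=
  Submodule.span F (Set.range fun i : Fin w => C.rowt t (Sum.inl i))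

/-- The error space `Δ(t, ρ)` of the error pattern `ρ`. -/
def Delta (C : NECCode G F w) (t : G.V) (ρ : Finset G.E) :
    Submodule F ({e : G.E // G.hd e = t} → F) :=
  Submodule.span F ((fun d => C.rowt t (Sum.inr d)) '' (ρ : Set G.E))

/-- A code is regular if `dim Φ(t) = w` for every sink node. -/
def Regular (C : NECCode G F w) : Prop :=
  ∀ t ∈ G.T, Module.finrank F (C.Phi t) = w

/-- The minimum distance `d_min^{(t)}` at the sink node `t`. -/
noncomputable def dmin (C : NECCode G F w) (t : G.V) : ℕ :=
  sInf {n | ∃ ρ : Finset G.E, G.rankOf t ρ = n ∧ C.Delta t ρ ⊓ C.Phi t ≠ ⊥}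

end NECCode



section Aux

variable {G : Network} {F : Type} [Field F] {w : ℕ}

/-- Direct adjacency between channels. -/
private def cadj (G : Network) : G.E → G.E → Prop := fun d e => G.hd d = G.tl e

private lemma cadj_wf (G : Network) : WellFounded (cadj G) := by
  have key : ∀ a b, Relation.TransGen (cadj G) a b →
      ∃ p : List G.E, ChainsTo G.tl G.hd p ∧ p.head? = some a ∧
        ∃ c, p.getLast? = some c ∧ G.hd c = G.tl b := by
    intro a b h
    induction h with
    | single h => exact ⟨[a], List.isChain_singleton a, rfl, a, rfl, h⟩
    | @tail b' c' hab hbc ih =>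
      obtain ⟨p, hp, hh, c, hl, hc⟩ := ih
      refine ⟨p ++ [b'], ?_, ?_, b', List.getLast?_concat, hbc⟩
      · refine List.isChain_append.mpr ⟨hp, List.isChain_singleton _, ?_⟩
        intro x hx y hy
        simp only [List.head?_cons, Option.mem_def, Option.some.injEq] at hy
        rw [hl] at hx
        simp only [Option.mem_def, Option.some.injEq] at hx
        subst hx; subst hy; exact hc
      · cases p with
        | nil => simp at hl
        | cons q l => simpa using hh
  have hirr : IsIrrefl G.E (Relation.TransGen (cadj G)) := by
    constructor
    intro a h
    obtain ⟨p, hp, hh, c, hl, hc⟩ := key a a h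
    exact G.acyclic p hp a hh c hl hc
  exact Subrelation.wf (fun h => Relation.TransGen.single h)
    (Finite.wellFounded_of_trans_of_irrefl _)

/-- Cut-free transfer coefficient from the source to a channel, for message index `i`:
the local-coefficient weighted sum over all paths from `s` that avoid `cut` (except
possibly at the end channel itself). -/
private noncomputable def gk (C : NECCode G F w) (cut : Finset G.E) (i : Fin w) : G.E → F :=
  (cadj_wf G).fix fun e rec =>
    (∑ d ∈ (Finset.univ.filter fun d => G.hd d = G.tl e ∧ d ∉ cut).attach,
        C.k d.1 e * rec d.1 (Finset.mem_filter.mp d.2).2.1)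
    + (if G.tl e = G.s then C.ksrc i e else 0)

private lemma gk_eq (C : NECCode G F w) (cut : Finset G.E) (i : Fin w) (e : G.E) :
    gk C cut i e =
      (∑ d ∈ Finset.univ.filter (fun d => G.hd d = G.tl e ∧ d ∉ cut),
          C.k d e * gk C cut i d)
      + (if G.tl e = G.s then C.ksrc i e else 0) := by
  conv_lhs => rw [gk, WellFounded.fix_eq]
  rw [← Finset.sum_attach (Finset.univ.filter fun d => G.hd d = G.tl e ∧ d ∉ cut)
        (fun d => C.k d e * gk C cut i d)]
  rfl

private lemma f_inl (C : NECCode G F w) (i : Fin w) (e : G.E) :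
    C.f e (Sum.inl i) =
      (∑ d ∈ Finset.univ.filter (fun d => G.hd d = G.tl e), C.k d e * C.f d (Sum.inl i))
      + (if G.tl e = G.s then C.ksrc i e else 0) := by
  have h := congrFun (C.f_eq e) (Sum.inl i)
  simpa [Finset.sum_apply, Pi.single_apply,
    apply_ite (fun g : (Fin w ⊕ G.E) → F => g (Sum.inl i))] using h

private lemma f_inr (C : NECCode G F w) (e c : G.E) :
    C.f e (Sum.inr c) =
      (∑ d ∈ Finset.univ.filter (fun d => G.hd d = G.tl e), C.k d e * C.f d (Sum.inr c))
      + (if c = e then 1 else 0) := by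
  have h := congrFun (C.f_eq e) (Sum.inr c)
  simpa [Finset.sum_apply, Pi.single_apply,
    apply_ite (fun g : (Fin w ⊕ G.E) → F => g (Sum.inr c))] using h

private lemma f_key (C : NECCode G F w) (cut : Finset G.E) (i : Fin w) :
    ∀ e : G.E, C.f e (Sum.inl i)
      = (if e ∈ cut then 0 else gk C cut i e)
        + ∑ c ∈ cut, gk C cut i c * C.f e (Sum.inr c) := by
  intro e
  induction e using (cadj_wf G).induction with
  | _ e IH =>
  have h1 : ∑ c ∈ cut, gk C cut i c * C.f e (Sum.inr c)
      = (∑ d ∈ Finset.univ.filter (fun d => G.hd d = G.tl e),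
          C.k d e * (C.f d (Sum.inl i) - (if d ∈ cut then 0 else gk C cut i d)))
        + (if e ∈ cut then gk C cut i e else 0) := by
    have step1 : ∑ c ∈ cut, gk C cut i c * C.f e (Sum.inr c)
        = (∑ c ∈ cut, ∑ d ∈ Finset.univ.filter (fun d => G.hd d = G.tl e),
            gk C cut i c * (C.k d e * C.f d (Sum.inr c)))
          + ∑ c ∈ cut, gk C cut i c * (if c = e then 1 else 0) := by
      rw [← Finset.sum_add_distrib]
      refine Finset.sum_congr rfl fun c hc => ?_
      rw [f_inr, mul_add, Finset.mul_sum]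
    rw [step1, Finset.sum_comm]
    congr 1
    · refine Finset.sum_congr rfl fun d hd => ?_
      have hde : G.hd d = G.tl e := (Finset.mem_filter.mp hd).2
      have ihd := IH d hde
      have : ∑ c ∈ cut, gk C cut i c * C.f d (Sum.inr c)
          = C.f d (Sum.inl i) - (if d ∈ cut then 0 else gk C cut i d) := by
        rw [ihd]; ring
      rw [← this, Finset.mul_sum]
      refine Finset.sum_congr rfl fun c hc => by ring
    · simp [mul_ite, Finset.sum_ite_eq']
  have h2 : ∑ d ∈ Finset.univ.filter (fun d => G.hd d = G.tl e),
        C.k d e * (if d ∈ cut then 0 else gk C cut i d)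
      = gk C cut i e - (if G.tl e = G.s then C.ksrc i e else 0) := by
    have : ∑ d ∈ Finset.univ.filter (fun d => G.hd d = G.tl e),
          C.k d e * (if d ∈ cut then 0 else gk C cut i d)
        = ∑ d ∈ Finset.univ.filter (fun d => G.hd d = G.tl e ∧ d ∉ cut),
            C.k d e * gk C cut i d := by
      calc ∑ d ∈ Finset.univ.filter (fun d => G.hd d = G.tl e),
            C.k d e * (if d ∈ cut then 0 else gk C cut i d)
          = ∑ d ∈ Finset.univ.filter (fun d => G.hd d = G.tl e),
              (if d ∉ cut then C.k d e * gk C cut i d else 0) := by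
            refine Finset.sum_congr rfl fun d _ => ?_
            by_cases hdc : d ∈ cut <;> simp [hdc]
        _ = ∑ d ∈ (Finset.univ.filter (fun d => G.hd d = G.tl e)).filter (fun d => d ∉ cut),
              C.k d e * gk C cut i d := (Finset.sum_filter _ _).symm
        _ = ∑ d ∈ Finset.univ.filter (fun d => G.hd d = G.tl e ∧ d ∉ cut),
              C.k d e * gk C cut i d := by rw [Finset.filter_filter]
    rw [this, gk_eq]; ring
  rw [h1]
  simp only [mul_sub, Finset.sum_sub_distrib]
  rw [h2, f_inl C i e]
  by_cases hec : e ∈ cut <;> simp only [hec, if_true, if_false] <;> ring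

private lemma gk_zero (C : NECCode G F w) (cut : Finset G.E) (i : Fin w) :
    ∀ e : G.E, e ∉ cut →
    (¬ ∃ p : List G.E, ChainsTo G.tl G.hd p ∧ (∃ a ∈ p.head?, G.tl a = G.s) ∧
        p.getLast? = some e ∧ ∀ a ∈ p, a ∉ cut) →
    gk C cut i e = 0 := by
  intro e
  induction e using (cadj_wf G).induction with
  | _ e IH =>
  intro he hnp
  rw [gk_eq]
  have hsrc : ¬ G.tl e = G.s := by
    intro hs
    exact hnp ⟨[e], List.isChain_singleton e, ⟨e, rfl, hs⟩, rfl, by simpa using he⟩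
  rw [if_neg hsrc, add_zero]
  refine Finset.sum_eq_zero fun d hd => ?_
  obtain ⟨-, hde, hdc⟩ := Finset.mem_filter.mp hd
  have hnd : ¬ ∃ p : List G.E, ChainsTo G.tl G.hd p ∧ (∃ a ∈ p.head?, G.tl a = G.s) ∧
      p.getLast? = some d ∧ ∀ a ∈ p, a ∉ cut := by
    rintro ⟨p, hp, hsrcp, hlast, hfree⟩
    refine hnp ⟨p ++ [e], ?_, ?_, List.getLast?_concat, ?_⟩
    · refine List.isChain_append.mpr ⟨hp, List.isChain_singleton _, ?_⟩
      intro x hx y hy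
      simp only [List.head?_cons, Option.mem_def, Option.some.injEq] at hy
      rw [hlast] at hx
      simp only [Option.mem_def, Option.some.injEq] at hx
      subst hx; subst hy; exact hde
    · obtain ⟨a, ha, has⟩ := hsrcp
      cases p with
      | nil => simp at hlast
      | cons q l =>
        simp only [List.head?_cons, Option.mem_def, Option.some.injEq] at ha
        refine ⟨q, rfl, ?_⟩
        rw [ha]; exact has
    · intro a ha
      rcases List.mem_append.mp ha with h | h
      · exact hfree a h
      · simp only [List.mem_singleton] at h; subst h; exact he
  rw [IH d hde hdc hnd, mul_zero]

end Aux

theorem statement0 (G : Network) (F : Type) [Field F] [Fintype F] (w : ℕ)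
    (C : NECCode G F w) (hreg : C.Regular) (hw1 : 1 ≤ w)
    (t : G.V) (ht : t ∈ G.T) (hwC : w ≤ G.minCut t)
    (e : Fin (G.minCut t) → G.E) (hinj : Function.Injective e)
    (hcut : IsCut G.tl G.hd G.s t (Finset.univ.image e))
    (horder : ∀ i j : Fin (G.minCut t), i < j →
      ∀ p : List G.E, ChainsTo G.tl G.hd p → p.head? = some (e j) → e i ∉ p) :
    C.Delta t ((Finset.univ.filter fun i : Fin (G.minCut t) => w ≤ (i : ℕ) + 1).image e)
      ⊓ C.Phi t ≠ ⊥ := by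
  classical
  set cut : Finset G.E := Finset.univ.image e with hcutdef
  set ρ : Finset G.E :=
    (Finset.univ.filter fun i : Fin (G.minCut t) => w ≤ (i : ℕ) + 1).image e with hρdef
  set σ : Finset G.E :=
    (Finset.univ.filter fun i : Fin (G.minCut t) => ¬ w ≤ (i : ℕ) + 1).image e with hσdef
  have hunion : ρ ∪ σ = cut := by
    rw [hρdef, hσdef, hcutdef, ← Finset.image_union, Finset.filter_union_filter_not_eq]
  have hrow : ∀ i : Fin w,
      C.rowt t (Sum.inl i) = ∑ c ∈ cut, gk C cut i c • C.rowt t (Sum.inr c) := by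
    intro i
    funext g
    have hkey := f_key C cut i g.1
    have hzero : (if g.1 ∈ cut then 0 else gk C cut i g.1) = 0 := by
      by_cases hgc : g.1 ∈ cut
      · simp [hgc]
      · rw [if_neg hgc]
        refine gk_zero C cut i g.1 hgc ?_
        rintro ⟨p, hp, hs, hl, hfree⟩
        obtain ⟨x, hx, hxc⟩ := hcut p ⟨hp, hs, ⟨g.1, by simp [hl], g.2⟩⟩
        exact hfree x hx hxc
    have : C.rowt t (Sum.inl i) g = ∑ c ∈ cut, gk C cut i c * C.f g.1 (Sum.inr c) := by
      show C.f g.1 (Sum.inl i) = _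
      rw [hkey, hzero, zero_add]
    rw [this]
    simp [Finset.sum_apply, NECCode.rowt]
  have hPhile : C.Phi t ≤ C.Delta t ρ ⊔ C.Delta t σ := by
    rw [NECCode.Phi, Submodule.span_le]
    rintro _ ⟨i, rfl⟩
    show C.rowt t (Sum.inl i) ∈ (C.Delta t ρ ⊔ C.Delta t σ : Submodule F _)
    rw [hrow i]
    refine Submodule.sum_mem _ fun c hc => Submodule.smul_mem _ _ ?_
    rw [← hunion] at hc
    rcases Finset.mem_union.mp hc with h | h
    · exact Submodule.mem_sup_left (Submodule.subset_span ⟨c, h, rfl⟩)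
    · exact Submodule.mem_sup_right (Submodule.subset_span ⟨c, h, rfl⟩)
  intro hbot
  have hPhi : Module.finrank F (C.Phi t) = w := hreg t ht
  have hσrank : Module.finrank F (C.Delta t σ) ≤ w - 1 := by
    have h1 : Module.finrank F (C.Delta t σ)
        ≤ (σ.image fun d => C.rowt t (Sum.inr d)).card := by
      rw [NECCode.Delta, ← Finset.coe_image]
      exact finrank_span_finset_le_card _
    have h2 : (σ.image fun d => C.rowt t (Sum.inr d)).card ≤ σ.card :=
      Finset.card_image_le
    have h3 : σ.card ≤
        (Finset.univ.filter fun i : Fin (G.minCut t) => ¬ w ≤ (i : ℕ) + 1).card := by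
      rw [hσdef]; exact Finset.card_image_le
    have h4 : (Finset.univ.filter fun i : Fin (G.minCut t) => ¬ w ≤ (i : ℕ) + 1).card
        ≤ (Finset.range (w - 1)).card := by
      refine Finset.card_le_card_of_injOn (fun i => (i : ℕ)) ?_ ?_
      · intro i hi
        simp only [Finset.mem_coe, Finset.mem_filter, Finset.mem_univ, true_and, not_le] at hi
        show (i : ℕ) ∈ Finset.range (w - 1)
        exact Finset.mem_range.mpr (by omega)
      · intro a _ b _ hab
        exact Fin.ext hab
    rw [Finset.card_range] at h4
    omega
  have hsup : Module.finrank F ↥(C.Delta t ρ ⊔ C.Phi t)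
      ≤ Module.finrank F ↥(C.Delta t ρ ⊔ C.Delta t σ) :=
    Submodule.finrank_mono (sup_le le_sup_left hPhile)
  have h1 := Submodule.finrank_sup_add_finrank_inf_eq (C.Delta t ρ) (C.Phi t)
  rw [hbot, finrank_bot, add_zero] at h1
  have h4 := Submodule.finrank_add_le_finrank_add_finrank (C.Delta t ρ) (C.Delta t σ)
  omega
end

section
/- (Refined Singleton bound.) Let a regular linear network error correction code over a finite field F with information rate w be given on a network G, and let t be a sink node with 1 ≤ w ≤ C_t. Then the minimum distance satisfies d_min^{(t)} ≤ δ_t + 1, where δ_t = C_t − w. -/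
open scoped BigOperators

/-! ### Auxiliary development for the refined Singleton bound -/

section SingletonAux

/-- One-step adjacency: channel `a` feeds into channel `b`. -/
def NStep (G : Network) (a b : G.E) : Prop := G.hd a = G.tl b

lemma chain_of_rtg {G : Network} {a b : G.E}
    (h : Relation.ReflTransGen (NStep G) a b) :
    ∃ p : List G.E, ChainsTo G.tl G.hd p ∧ p.head? = some a ∧ p.getLast? = some b := by
  induction h with
  | refl => exact ⟨[a], List.isChain_singleton a, rfl, rfl⟩
  | @tail b c hab hbc ih =>
    obtain ⟨p, hc, hh, hl⟩ := ih
    refine ⟨p ++ [c], ?_, ?_, List.getLast?_concat (l := p)⟩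
    · rw [ChainsTo, List.Chain', List.isChain_append]
      refine ⟨hc, List.isChain_singleton c, ?_⟩
      intro x hx y hy
      simp only [List.head?_cons, Option.mem_some_iff] at hy
      subst hy
      rw [hl] at hx
      simp only [Option.mem_some_iff] at hx
      subst hx
      exact hbc
    · cases p with
      | nil => simp at hh
      | cons x xs => simpa using hh

lemma nstep_not_trans_refl {G : Network} (a : G.E) :
    ¬ Relation.TransGen (NStep G) a a := by
  intro h
  obtain ⟨b, hab, hba⟩ := (Relation.TransGen.tail'_iff).mp h
  obtain ⟨p, hc, hh, hl⟩ := chain_of_rtg hab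
  exact G.acyclic p hc a hh b hl hba

lemma wf_nstep (G : Network) : WellFounded (Relation.TransGen (NStep G)) := by
  have : IsIrrefl G.E (Relation.TransGen (NStep G)) := ⟨nstep_not_trans_refl⟩
  exact Finite.wellFounded_of_trans_of_irrefl _

lemma wf_nstep' (G : Network) :
    WellFounded (fun a b => Relation.TransGen (NStep G) b a) := by
  have : IsIrrefl G.E (fun a b => Relation.TransGen (NStep G) b a) :=
    ⟨fun a h => nstep_not_trans_refl a h⟩
  have : IsTrans G.E (fun a b => Relation.TransGen (NStep G) b a) :=
    ⟨fun _ _ _ h1 h2 => Relation.TransGen.trans h2 h1⟩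
  exact Finite.wellFounded_of_trans_of_irrefl _

lemma nstep_induction (G : Network) (P : G.E → Prop)
    (ind : ∀ x, (∀ y, NStep G y x → P y) → P x) : ∀ x, P x :=
  fun x => (wf_nstep G).induction x
    (fun x IH => ind x fun y hy => IH y (Relation.TransGen.single hy))

lemma nstep_rev_induction (G : Network) (P : G.E → Prop)
    (ind : ∀ x, (∀ y, NStep G x y → P y) → P x) : ∀ x, P x :=
  fun x => (wf_nstep' G).induction x
    (fun x IH => ind x fun y hy => IH y (Relation.TransGen.single hy))

/-- `e` is separated from `t` by `CT`: every path from `e` to `t` meets `CT`. -/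
def SepFrom (G : Network) (t : G.V) (CT : Finset G.E) (e : G.E) : Prop :=
  ∀ p : List G.E, ChainsTo G.tl G.hd p → p.head? = some e →
    (∃ e' ∈ p.getLast?, G.hd e' = t) → ∃ c ∈ p, c ∈ CT

namespace NECCode

variable {G : Network} {F : Type} [Field F] {w : ℕ}

lemma rec_inr (C : NECCode G F w) (a b : G.E) :
    C.f a (Sum.inr b) =
      (∑ d ∈ Finset.univ.filter (fun d => G.hd d = G.tl a), C.k d a * C.f d (Sum.inr b))
        + (if b = a then (1:F) else 0) := by
  conv_lhs => rw [C.f_eq a]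
  simp [Finset.sum_apply, Pi.single_apply,
    apply_ite (fun g : (Fin w ⊕ G.E) → F => g (Sum.inr b))]

lemma rec_inl (C : NECCode G F w) (a : G.E) (i : Fin w) :
    C.f a (Sum.inl i) =
      (∑ d ∈ Finset.univ.filter (fun d => G.hd d = G.tl a), C.k d a * C.f d (Sum.inl i))
        + (if G.tl a = G.s then C.ksrc i a else 0) := by
  conv_lhs => rw [C.f_eq a]
  simp [Finset.sum_apply, Pi.single_apply,
    apply_ite (fun g : (Fin w ⊕ G.E) → F => g (Sum.inl i))]

lemma sum_in_eq (C : NECCode G F w) (x g : G.E) :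
    (∑ d ∈ Finset.univ.filter (fun d => G.hd d = G.tl x), C.k d x * C.f d (Sum.inr g))
      = C.f x (Sum.inr g) - (if g = x then (1:F) else 0) := by
  rw [C.rec_inr x g]; ring

lemma forward (C : NECCode G F w) (e : G.E) : ∀ e' : G.E,
    C.f e' (Sum.inr e) = (if e = e' then (1:F) else 0)
      + ∑ g ∈ Finset.univ.filter (fun g => G.tl g = G.hd e), C.k e g * C.f e' (Sum.inr g) := by
  refine nstep_induction G _ ?_
  intro x IH
  rw [C.rec_inr x e]
  rw [Finset.sum_congr rfl (fun d hd => by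
    rw [IH d (show G.hd d = G.tl x by simpa using hd)])]
  simp_rw [mul_add, Finset.sum_add_distrib, mul_ite, mul_one, mul_zero, Finset.sum_ite_eq,
    Finset.mul_sum]
  rw [Finset.sum_comm]
  simp_rw [mul_left_comm, ← Finset.mul_sum, C.sum_in_eq x, mul_sub,
    Finset.sum_sub_distrib, mul_ite, mul_one, mul_zero, Finset.sum_ite_eq']
  have hco : ((x ∈ Finset.univ.filter fun g => G.tl g = G.hd e))
      ↔ (e ∈ Finset.univ.filter fun d => G.hd d = G.tl x) := by
    simp [eq_comm]
  rw [if_congr hco rfl rfl]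
  ring

lemma inl_expand (C : NECCode G F w) (i : Fin w) : ∀ e : G.E,
    C.f e (Sum.inl i) = ∑ d ∈ Finset.univ.filter (fun d => G.tl d = G.s),
      C.ksrc i d * C.f e (Sum.inr d) := by
  refine nstep_induction G _ ?_
  intro x IH
  rw [C.rec_inl x i]
  rw [Finset.sum_congr rfl (fun d hd => by
    rw [IH d (show G.hd d = G.tl x by simpa using hd)])]
  have e1 : ∀ d, C.k d x * (∑ d0 ∈ Finset.univ.filter (fun d0 => G.tl d0 = G.s),
        C.ksrc i d0 * C.f d (Sum.inr d0))
      = ∑ d0 ∈ Finset.univ.filter (fun d0 => G.tl d0 = G.s),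
          C.ksrc i d0 * (C.k d x * C.f d (Sum.inr d0)) := by
    intro d
    rw [Finset.mul_sum]
    exact Finset.sum_congr rfl fun g _ => by ring
  rw [Finset.sum_congr rfl fun d _ => e1 d, Finset.sum_comm]
  simp_rw [← Finset.mul_sum, C.sum_in_eq x, mul_sub]
  rw [Finset.sum_sub_distrib]
  simp_rw [mul_ite, mul_one, mul_zero]
  rw [Finset.sum_ite_eq']
  have hco : ((x ∈ Finset.univ.filter fun d => G.tl d = G.s))
      ↔ (G.tl x = G.s) := by simp
  rw [if_congr hco rfl rfl]
  ring

lemma sep_sum_zero (C : NECCode G F w) (t : G.V) (CT : Finset G.E)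
    (lam : {e : G.E // G.hd e = t} → F)
    (h0 : ∀ c ∈ CT, (∑ e' : {e : G.E // G.hd e = t}, lam e' * C.f e'.1 (Sum.inr c)) = 0) :
    ∀ e : G.E, SepFrom G t CT e →
      (∑ e' : {e : G.E // G.hd e = t}, lam e' * C.f e'.1 (Sum.inr e)) = 0 := by
  refine nstep_rev_induction G _ ?_
  intro x IH hsep
  by_cases hx : x ∈ CT
  · exact h0 x hx
  have hdt : G.hd x ≠ t := by
    intro h
    obtain ⟨c, hc1, hc2⟩ := hsep [x] (List.isChain_singleton x) rfl ⟨x, rfl, h⟩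
    simp only [List.mem_singleton] at hc1
    subst hc1
    exact hx hc2
  have hne : ∀ e' : {e : G.E // G.hd e = t}, x ≠ e'.1 := by
    intro e' h
    exact hdt (h ▸ e'.2)
  have h1 : ∀ e' : {e : G.E // G.hd e = t},
      lam e' * C.f e'.1 (Sum.inr x)
        = ∑ g ∈ Finset.univ.filter (fun g => G.tl g = G.hd x),
            C.k x g * (lam e' * C.f e'.1 (Sum.inr g)) := by
    intro e'
    rw [C.forward x e'.1, if_neg (hne e'), zero_add, Finset.mul_sum]
    exact Finset.sum_congr rfl fun g _ => by ring
  rw [Finset.sum_congr rfl (fun e' _ => h1 e'), Finset.sum_comm]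
  refine Finset.sum_eq_zero fun g hg => ?_
  have hstep : NStep G x g := ((Finset.mem_filter.mp hg).2).symm
  have hsepg : SepFrom G t CT g := by
    intro p hp hph hpl
    obtain ⟨q, rfl⟩ : ∃ q, p = g :: q := by
      cases p with
      | nil => simp at hph
      | cons a q =>
        refine ⟨q, ?_⟩
        simp only [List.head?_cons, Option.some.injEq] at hph
        rw [hph]
    obtain ⟨c, hc1, hc2⟩ := hsep (x :: g :: q) (List.IsChain.cons_cons hstep hp) rfl
      (by rwa [List.getLast?_cons_cons])
    rcases List.mem_cons.mp hc1 with h | h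
    · exact absurd (h ▸ hc2) hx
    · exact ⟨c, h, hc2⟩
  rw [← Finset.mul_sum, IH g hstep hsepg, mul_zero]

lemma phi_le_delta (C : NECCode G F w) (t : G.V) (CT : Finset G.E)
    (hcut : IsCut G.tl G.hd G.s t CT) : C.Phi t ≤ C.Delta t CT := by
  rw [Phi, Submodule.span_le]
  rintro _ ⟨i, rfl⟩
  by_contra hx
  obtain ⟨φ, hφ1, hφ2⟩ := Submodule.exists_dual_map_eq_bot_of_notMem hx inferInstance
  set lam : {e : G.E // G.hd e = t} → F := fun e' => φ (Pi.single e' 1) with hlam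
  have key : ∀ x : {e : G.E // G.hd e = t} → F, φ x = ∑ e', lam e' * x e' := by
    intro x
    conv_lhs => rw [← Finset.univ_sum_single x]
    rw [map_sum]
    refine Finset.sum_congr rfl fun e' _ => ?_
    have hs : Pi.single e' (x e')
        = x e' • (Pi.single e' (1:F) : {e : G.E // G.hd e = t} → F) := by
      funext j
      by_cases h : j = e' <;> simp [Pi.single_apply, h]
    rw [hs, map_smul, smul_eq_mul]
    exact mul_comm _ _
  have hzero : ∀ c ∈ CT,
      (∑ e' : {e : G.E // G.hd e = t}, lam e' * C.f e'.1 (Sum.inr c)) = 0 := by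
    intro c hc
    have hmem : C.rowt t (Sum.inr c) ∈ C.Delta t CT :=
      Submodule.subset_span ⟨c, hc, rfl⟩
    have hz : φ (C.rowt t (Sum.inr c)) = 0 := by
      have hmm := Submodule.mem_map_of_mem (f := φ) hmem
      rw [hφ2] at hmm
      simpa using hmm
    rw [key] at hz
    exact hz
  have hone : φ (C.rowt t (Sum.inl i)) = 0 := by
    rw [key]
    have hexp : ∀ e' : {e : G.E // G.hd e = t},
        lam e' * C.rowt t (Sum.inl i) e'
          = ∑ d ∈ Finset.univ.filter (fun d => G.tl d = G.s),
              lam e' * (C.ksrc i d * C.f e'.1 (Sum.inr d)) := by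
      intro e'
      rw [show C.rowt t (Sum.inl i) e' = C.f e'.1 (Sum.inl i) from rfl,
        C.inl_expand i e'.1, Finset.mul_sum]
    rw [Finset.sum_congr rfl (fun e' _ => hexp e'), Finset.sum_comm]
    refine Finset.sum_eq_zero fun d hd => ?_
    have hsep : SepFrom G t CT d := by
      intro p hp hph hpl
      exact hcut p ⟨hp, ⟨d, hph, (Finset.mem_filter.mp hd).2⟩, hpl⟩
    have hz := C.sep_sum_zero t CT lam hzero d hsep
    calc (∑ e' : {e : G.E // G.hd e = t}, lam e' * (C.ksrc i d * C.f e'.1 (Sum.inr d)))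
        = C.ksrc i d * ∑ e' : {e : G.E // G.hd e = t}, lam e' * C.f e'.1 (Sum.inr d) := by
          rw [Finset.mul_sum]
          exact Finset.sum_congr rfl fun _ _ => by ring
      _ = 0 := by rw [hz, mul_zero]
  exact hφ1 hone

end NECCode

end SingletonAux

theorem statement1 (G : Network) (F : Type) [Field F] [Fintype F] (w : ℕ)
    (C : NECCode G F w) (hreg : C.Regular) (hw1 : 1 ≤ w)
    (t : G.V) (ht : t ∈ G.T) (hwC : w ≤ G.minCut t) :
    C.dmin t ≤ (G.minCut t - w) + 1 := by
  classical
  have huniv : IsCut G.tl G.hd G.s t (Finset.univ : Finset G.E) := by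
    intro p hp
    obtain ⟨e, he, _⟩ := hp.2.1
    exact ⟨e, List.mem_of_mem_head? he, Finset.mem_univ e⟩
  have hne : {n | ∃ Cf : Finset G.E, IsCut G.tl G.hd G.s t Cf ∧ Cf.card = n}.Nonempty :=
    ⟨_, Finset.univ, huniv, rfl⟩
  obtain ⟨CT, hCTcut, hCTcard⟩ := Nat.sInf_mem hne
  have hCTcard' : CT.card = G.minCut t := hCTcard
  obtain ⟨ρ, hρsub, hρcard⟩ := Finset.exists_subset_card_eq
    (show G.minCut t - w + 1 ≤ CT.card by rw [hCTcard']; omega)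
  have hrank : G.rankOf t ρ ≤ ρ.card := by
    apply Nat.sInf_le
    refine ⟨ρ, ?_, rfl⟩
    intro p hp
    obtain ⟨e, he, hte⟩ := hp.2.1
    refine ⟨e, List.mem_of_mem_head? he, ?_⟩
    by_contra hmem
    simp only [hmem, if_neg, ite_false] at hte
    exact Option.some_ne_none _ hte
  have hint : C.Delta t ρ ⊓ C.Phi t ≠ ⊥ := by
    intro hbot
    have hPhiLe : C.Phi t ≤ C.Delta t ρ ⊔ C.Delta t (CT \ ρ) := by
      refine le_trans (C.phi_le_delta t CT hCTcut) ?_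
      rw [NECCode.Delta, Submodule.span_le]
      rintro _ ⟨d, hd, rfl⟩
      by_cases h : d ∈ ρ
      · exact Submodule.mem_sup_left (Submodule.subset_span ⟨d, h, rfl⟩)
      · exact Submodule.mem_sup_right (Submodule.subset_span
          ⟨d, Finset.mem_sdiff.mpr ⟨Finset.mem_coe.mp hd, h⟩, rfl⟩)
    have h1 : Module.finrank F (C.Phi t) = w := hreg t ht
    have h2 : Module.finrank F ↥(C.Phi t ⊔ C.Delta t ρ)
        = w + Module.finrank F (C.Delta t ρ) := by
      have hh := Submodule.finrank_sup_add_finrank_inf_eq (C.Phi t) (C.Delta t ρ)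
      rw [inf_comm, hbot, finrank_bot, add_zero, h1] at hh
      exact hh
    have h3 : C.Phi t ⊔ C.Delta t ρ ≤ C.Delta t ρ ⊔ C.Delta t (CT \ ρ) :=
      sup_le hPhiLe le_sup_left
    have h4 : Module.finrank F ↥(C.Delta t ρ ⊔ C.Delta t (CT \ ρ))
        ≤ Module.finrank F (C.Delta t ρ) + Module.finrank F (C.Delta t (CT \ ρ)) := by
      have hh := Submodule.finrank_sup_add_finrank_inf_eq (C.Delta t ρ) (C.Delta t (CT \ ρ))
      omega
    have h5 : Module.finrank F (C.Delta t (CT \ ρ)) ≤ (CT \ ρ).card := by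
      rw [NECCode.Delta, ← Finset.coe_image]
      exact le_trans (finrank_span_finset_le_card _) Finset.card_image_le
    have h6 : (CT \ ρ).card = G.minCut t - (G.minCut t - w + 1) := by
      rw [Finset.card_sdiff_of_subset hρsub, hρcard, hCTcard']
    have h7 := Submodule.finrank_mono h3
    omega
  have hmem2 : G.rankOf t ρ ∈
      {n | ∃ σ : Finset G.E, G.rankOf t σ = n ∧ C.Delta t σ ⊓ C.Phi t ≠ ⊥} :=
    ⟨ρ, rfl, hint⟩
  calc C.dmin t ≤ G.rankOf t ρ := Nat.sInf_le hmem2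
    _ ≤ ρ.card := hrank
    _ = G.minCut t - w + 1 := hρcard
    _ ≤ (G.minCut t - w) + 1 := le_rfl
end

section
/- Let G be a network, t a sink node, and w an information rate with 1 ≤ w ≤ C_t; set δ_t = C_t − w. Then for any error pattern ρ with |ρ| = rank_t(ρ) = δ_t, there exist w + δ_t pairwise channel-disjoint paths ending at t such that exactly δ_t of these paths start with the δ_t distinct channels of ρ, and the remaining w paths are paths from the source node s to t. -/
open scoped BigOperators

namespace MengerAux

open Classical List

variable {E V : Type} [DecidableEq E] [DecidableEq V]

noncomputable def outC (tl : E → V) (F : Finset E) (v : V) : ℕ :=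
  (F.filter (fun e => tl e = v)).card

noncomputable def inC (hd : E → V) (F : Finset E) (v : V) : ℕ :=
  (F.filter (fun e => hd e = v)).card

def IsFlow (tl hd : E → V) (s t : V) (F : Finset E) : Prop :=
  ∀ v, v ≠ s → v ≠ t → inC hd F v = outC tl F v

/-- counting heads vs tails along a chain -/
lemma chain_count (tl hd : E → V) :
    ∀ (p : List E), p ≠ [] → ChainsTo tl hd p →
    ∀ (a b : V), (∀ e ∈ p.head?, tl e = a) → (∀ e ∈ p.getLast?, hd e = b) → ∀ v : V,
    p.countP (fun e => decide (hd e = v)) + (if a = v then 1 else 0)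
      = p.countP (fun e => decide (tl e = v)) + (if b = v then 1 else 0) := by
  intro p
  induction p with
  | nil => simp
  | cons e q ih =>
    intro _ hc a b ha hb v
    have ha' : tl e = a := by simpa using ha
    subst ha'
    rcases q with _ | ⟨f, q'⟩
    · have hb' : hd e = b := by simpa using hb
      subst hb'
      simp only [countP_cons, countP_nil, decide_eq_true_eq]
      split_ifs <;> omega
    · have hrel : hd e = tl f := (List.isChain_cons_cons.mp hc).1
      have hcq : ChainsTo tl hd (f :: q') := (List.isChain_cons_cons.mp hc).2
      have hb' : ∀ x ∈ (f :: q').getLast?, hd x = b := by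
        intro x hx; exact hb x (by simpa [List.getLast?_cons_cons] using hx)
      have IH := ih (by simp) hcq (tl f) b (by simp) hb' v
      simp only [countP_cons, decide_eq_true_eq] at IH ⊢
      rw [hrel]
      split_ifs at IH ⊢ <;> omega

/-- every chain can be shortened to a vertex-nodup chain with the same endpoints -/
lemma nodup_chain {r : V → V → Prop} :
    ∀ (n : ℕ) (a : V) (l : List V), l.length ≤ n → List.Chain r a l →
    ∃ l', List.Chain r a l' ∧ (a::l').getLast? = (a::l).getLast? ∧
      (a::l').Nodup ∧ ∀ x ∈ l', x ∈ l := by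
  intro n
  induction n with
  | zero =>
    intro a l hl _
    have : l = [] := List.eq_nil_of_length_eq_zero (Nat.le_zero.mp hl)
    subst this
    exact ⟨[], List.Chain.nil, rfl, by simp, by simp⟩
  | succ n ih =>
    intro a l hl hc
    by_cases hal : a ∈ l
    · obtain ⟨u, v, rfl⟩ := List.append_of_mem hal
      have hcv : List.Chain r a v := (List.isChain_cons_split.mp hc).2
      have hlen : v.length ≤ n := by simp at hl; omega
      obtain ⟨l', h1, h2, h3, h4⟩ := ih a v hlen hcv
      refine ⟨l', h1, ?_, h3, fun x hx => by simp [h4 x hx]⟩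
      rw [h2]
      have h5 : a :: (u ++ a :: v) = (a :: u) ++ (a :: v) := by simp
      rw [h5, List.getLast?_append,
        List.getLast?_eq_getLast (l := a :: v) (by simp)]
      rfl
    · rcases l with _ | ⟨c, m⟩
      · exact ⟨[], List.Chain.nil, rfl, by simp, by simp⟩
      have hrac : r a c := (List.isChain_cons_cons.mp hc).1
      have hcm : List.Chain r c m := (List.isChain_cons_cons.mp hc).2
      obtain ⟨m', h1, h2, h3, h4⟩ := ih c m (by simp at hl; omega) hcm
      refine ⟨c :: m', List.isChain_cons_cons.mpr ⟨hrac, h1⟩, ?_, ?_, ?_⟩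
      · rw [List.getLast?_cons_cons, List.getLast?_cons_cons]
        exact h2
      · simp only [List.nodup_cons] at h3 ⊢
        refine ⟨?_, h3⟩
        intro hx
        rcases List.mem_cons.mp hx with rfl | hx
        · exact hal (by simp)
        · exact hal (List.mem_cons.mpr (Or.inr (h4 _ hx)))
      · intro x hx
        rcases List.mem_cons.mp hx with rfl | hx
        · simp
        · exact List.mem_cons.mpr (Or.inr (h4 _ hx))

end MengerAux

namespace MengerAux
open Classical List

variable {E V : Type} [DecidableEq E] [DecidableEq V]

lemma countP_eq_card_filter_toFinset (p : List E) (nodup : p.Nodup) (q : E → Prop)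
    [DecidablePred q] :
    p.countP (fun e => decide (q e)) = (p.toFinset.filter q).card := by
  induction p with
  | nil => simp
  | cons e l ih =>
    rw [List.nodup_cons] at nodup
    rw [List.countP_cons, List.toFinset_cons, ih nodup.2]
    by_cases h : q e
    · rw [Finset.filter_insert, if_pos h, Finset.card_insert_of_notMem (by
        simp only [Finset.mem_filter]; exact fun hh => nodup.1 (List.mem_toFinset.mp hh.1))]
      simp [h]
    · rw [Finset.filter_insert, if_neg h]
      simp [h]

lemma exists_out (tl hd : E → V) (s t : V) (Hs : ∀ e, hd e ≠ s)
    (F : Finset E) (hF : IsFlow tl hd s t F)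
    (p : List E) (hne : p ≠ []) (nodup : p.Nodup) (hc : ChainsTo tl hd p)
    (hsub : ∀ e ∈ p, e ∈ F) (hhead : ∀ e ∈ p.head?, tl e = s)
    (v : V) (hv : ∀ e ∈ p.getLast?, hd e = v) (hvt : v ≠ t) :
    ∃ e, e ∈ F ∧ e ∉ p ∧ tl e = v := by
  by_contra hcon
  push_neg at hcon
  have hvs : v ≠ s := by
    have := hv (p.getLast hne) (List.getLast?_eq_getLast hne)
    exact this ▸ Hs _
  have hcc := chain_count tl hd p hne hc s v hhead hv v
  rw [if_neg (Ne.symm hvs), if_pos rfl] at hcc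
  have hsub' : p.toFinset ⊆ F := fun e he => hsub e (List.mem_toFinset.mp he)
  have h1 : p.countP (fun e => decide (hd e = v)) ≤ inC hd F v := by
    rw [countP_eq_card_filter_toFinset p nodup]
    exact Finset.card_le_card (Finset.filter_subset_filter _ hsub')
  have h2 : outC tl F v ≤ p.countP (fun e => decide (tl e = v)) := by
    rw [countP_eq_card_filter_toFinset p nodup]
    apply Finset.card_le_card
    intro e he
    rw [Finset.mem_filter] at he ⊢
    refine ⟨List.mem_toFinset.mpr ?_, he.2⟩
    by_contra hep
    exact hcon e he.1 hep he.2
  have h3 := hF v hvs hvt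
  omega

lemma grow_path [Fintype E] (tl hd : E → V) (s t : V) (Hs : ∀ e, hd e ≠ s)
    (F : Finset E) (hF : IsFlow tl hd s t F) :
    ∀ (n : ℕ) (p : List E), p ≠ [] → p.Nodup → ChainsTo tl hd p → (∀ e ∈ p, e ∈ F) →
    (∀ e ∈ p.head?, tl e = s) → F.card ≤ n + p.length →
    ∃ q : List E, q ≠ [] ∧ q.Nodup ∧ ChainsTo tl hd q ∧ (∀ e ∈ q, e ∈ F) ∧
      (∀ e ∈ q.head?, tl e = s) ∧ (∀ e ∈ q.getLast?, hd e = t) := by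
  intro n
  induction n with
  | zero =>
    intro p hne nodup hc hsub hhead hcard
    set v := hd (p.getLast hne) with hvdef
    have hv : ∀ e ∈ p.getLast?, hd e = v := by
      intro e he
      rw [List.getLast?_eq_getLast hne] at he
      simp only [Option.mem_def, Option.some.injEq] at he
      rw [← he]
    by_cases hvt : v = t
    · exact ⟨p, hne, nodup, hc, hsub, hhead, fun e he => (hv e he).trans hvt⟩
    · exfalso
      obtain ⟨e, heF, hep, _⟩ := exists_out tl hd s t Hs F hF p hne nodup hc hsub hhead v hv hvt
      have h1 : insert e p.toFinset ⊆ F := by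
        intro x hx
        rcases Finset.mem_insert.mp hx with rfl | hx
        · exact heF
        · exact hsub x (List.mem_toFinset.mp hx)
      have h2 := Finset.card_le_card h1
      rw [Finset.card_insert_of_notMem (fun h => hep (List.mem_toFinset.mp h)),
        List.toFinset_card_of_nodup nodup] at h2
      omega
  | succ n ih =>
    intro p hne nodup hc hsub hhead hcard
    set v := hd (p.getLast hne) with hvdef
    have hv : ∀ e ∈ p.getLast?, hd e = v := by
      intro e he
      rw [List.getLast?_eq_getLast hne] at he
      simp only [Option.mem_def, Option.some.injEq] at he
      rw [← he]
    by_cases hvt : v = t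
    · exact ⟨p, hne, nodup, hc, hsub, hhead, fun e he => (hv e he).trans hvt⟩
    · obtain ⟨e, heF, hep, hetl⟩ := exists_out tl hd s t Hs F hF p hne nodup hc hsub hhead v hv hvt
      apply ih (p ++ [e])
      · simp
      · rw [List.nodup_append]
        exact ⟨nodup, List.nodup_singleton e, by simpa using fun a ha (h : a = e) => hep (h ▸ ha)⟩
      · simp only [ChainsTo, List.Chain', List.isChain_append]
        refine ⟨hc, List.isChain_singleton e, ?_⟩
        intro x hx y hy
        simp only [head?_cons, Option.mem_def, Option.some.injEq] at hy
        subst hy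
        rw [hv x hx, hetl]
      · intro x hx
        rcases List.mem_append.mp hx with hx | hx
        · exact hsub x hx
        · simp only [List.mem_singleton] at hx; subst hx; exact heF
      · rcases p with _ | ⟨f, p'⟩
        · exact absurd rfl hne
        · intro x hx
          simp only [List.cons_append, head?_cons, Option.mem_def, Option.some.injEq] at hx
          subst hx
          exact hhead f rfl
      · rw [List.length_append, List.length_singleton]
        omega

lemma flow_path [Fintype E] (tl hd : E → V) (s t : V) (Hs : ∀ e, hd e ≠ s)
    (F : Finset E) (hF : IsFlow tl hd s t F) (hval : 1 ≤ outC tl F s) :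
    ∃ p : List E, p ≠ [] ∧ p.Nodup ∧ IsPathBetween tl hd s t p ∧ ∀ e ∈ p, e ∈ F := by
  obtain ⟨e, he⟩ := Finset.card_pos.mp (Nat.lt_of_lt_of_le Nat.zero_lt_one hval)
  rw [Finset.mem_filter] at he
  obtain ⟨q, h1, h2, h3, h4, h5, h6⟩ := grow_path tl hd s t Hs F hF F.card [e] (by simp)
    (List.nodup_singleton e) (List.isChain_singleton e)
    (by intro x hx; simp only [List.mem_singleton] at hx; subst hx; exact he.1)
    (by intro x hx; simp only [head?_cons, Option.mem_def, Option.some.injEq] at hx;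
        subst hx; exact he.2)
    (by simp)
  refine ⟨q, h1, h2, ⟨h3, ?_, ?_⟩, h4⟩
  · exact ⟨q.head h1, List.head?_eq_head h1, h5 _ (List.head?_eq_head h1)⟩
  · exact ⟨q.getLast h1, List.getLast?_eq_getLast h1, h6 _ (List.getLast?_eq_getLast h1)⟩

lemma filter_sdiff_card (F P : Finset E) (hPF : P ⊆ F) (q : E → Prop) [DecidablePred q] :
    ((F \ P).filter q).card + (P.filter q).card = (F.filter q).card := by
  have h1 : (F \ P).filter q = F.filter q \ P.filter q := by
    ext x
    simp only [Finset.mem_filter, Finset.mem_sdiff]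
    tauto
  rw [h1]
  exact Finset.card_sdiff_add_card_eq_card (Finset.filter_subset_filter _ hPF)

lemma flow_remove (tl hd : E → V) (s t : V) (Hs : ∀ e, hd e ≠ s) (hst : s ≠ t)
    (F : Finset E) (hF : IsFlow tl hd s t F)
    (p : List E) (hne : p ≠ []) (nodup : p.Nodup)
    (hpath : IsPathBetween tl hd s t p) (hsub : ∀ e ∈ p, e ∈ F) :
    IsFlow tl hd s t (F \ p.toFinset) ∧ outC tl (F \ p.toFinset) s + 1 = outC tl F s := by
  have hsub' : p.toFinset ⊆ F := fun e he => hsub e (List.mem_toFinset.mp he)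
  obtain ⟨hc, ⟨eh, heh, heh2⟩, ⟨el, hel, hel2⟩⟩ := hpath
  have hhead : ∀ e ∈ p.head?, tl e = s := by
    intro x hx; rw [hx] at heh;
    simp only [Option.mem_def, Option.some.injEq] at heh
    rw [heh]; exact heh2
  have hlast : ∀ e ∈ p.getLast?, hd e = t := by
    intro x hx; rw [hx] at hel
    simp only [Option.mem_def, Option.some.injEq] at hel
    rw [hel]; exact hel2
  have key := chain_count tl hd p hne hc s t hhead hlast
  have hin : ∀ v, inC hd (F \ p.toFinset) v + (p.toFinset.filter (fun e => hd e = v)).card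
      = inC hd F v := fun v => filter_sdiff_card F p.toFinset hsub' _
  have hout : ∀ v, outC tl (F \ p.toFinset) v + (p.toFinset.filter (fun e => tl e = v)).card
      = outC tl F v := fun v => filter_sdiff_card F p.toFinset hsub' _
  constructor
  · intro v hvs hvt
    have hk := key v
    rw [if_neg (fun h => hvs h.symm), if_neg (fun h => hvt h.symm)] at hk
    rw [countP_eq_card_filter_toFinset p nodup, countP_eq_card_filter_toFinset p nodup] at hk
    have := hF v hvs hvt
    have h1 := hin v
    have h2 := hout v
    omega
  · have hk := key s
    rw [if_pos rfl, if_neg (fun h => hst h.symm)] at hk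
    have hz : p.countP (fun e => decide (hd e = s)) = 0 := by
      rw [List.countP_eq_zero]
      intro e _
      simp [Hs e]
    rw [hz, countP_eq_card_filter_toFinset p nodup] at hk
    have h2 := hout s
    omega

lemma flow_decomp [Fintype E] (tl hd : E → V) (s t : V) (Hs : ∀ e, hd e ≠ s) (hst : s ≠ t) :
    ∀ (k : ℕ) (F : Finset E), IsFlow tl hd s t F → outC tl F s = k →
    ∃ P : Fin k → List E, (∀ i, IsPathBetween tl hd s t (P i) ∧ ∀ x ∈ P i, x ∈ F) ∧
      (∀ i j, i ≠ j → ∀ x ∈ P i, x ∉ P j) := by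
  intro k
  induction k with
  | zero => exact fun F _ _ => ⟨fun i => i.elim0, fun i => i.elim0, fun i => i.elim0⟩
  | succ k ih =>
    intro F hF hval
    obtain ⟨p, hne, nodup, hpath, hsub⟩ := flow_path tl hd s t Hs F hF (by omega)
    obtain ⟨hF', hval'⟩ := flow_remove tl hd s t Hs hst F hF p hne nodup hpath hsub
    obtain ⟨P, h1, h2⟩ := ih (F \ p.toFinset) hF' (by omega)
    refine ⟨Fin.cons p P, ?_, ?_⟩
    · intro i
      induction i using Fin.cases with
      | zero => exact ⟨by simpa using hpath, by simpa using hsub⟩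
      | succ i =>
        rw [Fin.cons_succ]
        exact ⟨(h1 i).1, fun x hx => (Finset.mem_sdiff.mp ((h1 i).2 x hx)).1⟩
    · intro i j hij x hxi hxj
      have hdisj : ∀ i', ∀ x ∈ p, x ∉ P i' := by
        intro i' x hx hx'
        exact (Finset.mem_sdiff.mp ((h1 i').2 x hx')).2 (List.mem_toFinset.mpr hx)
      induction i using Fin.cases with
      | zero =>
        rw [Fin.cons_zero] at hxi
        induction j using Fin.cases with
        | zero => exact hij rfl
        | succ j => rw [Fin.cons_succ] at hxj; exact hdisj j x hxi hxj
      | succ i =>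
        rw [Fin.cons_succ] at hxi
        induction j using Fin.cases with
        | zero => rw [Fin.cons_zero] at hxj; exact hdisj i x hxj hxi
        | succ j =>
          rw [Fin.cons_succ] at hxj
          exact h2 i j (fun h => hij (by rw [h])) x hxi hxj

end MengerAux

namespace MengerAux
open Classical List

variable {E V : Type} [DecidableEq E] [DecidableEq V]

lemma exists_fn_path {r : V → V → Prop} {s t : V} (h : Relation.ReflTransGen r s t) :
    ∃ (m : ℕ) (w : Fin (m+1) → V), Function.Injective w ∧ w 0 = s ∧ w (Fin.last m) = t ∧
      ∀ i : Fin m, r (w i.castSucc) (w i.succ) := by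
  obtain ⟨l, hchain, hlast⟩ := List.exists_isChain_cons_of_relationReflTransGen h
  obtain ⟨l', h1, h2, h3, _⟩ := nodup_chain l.length s l le_rfl hchain
  have hlen : l'.length + 1 = (s :: l').length := by simp
  refine ⟨l'.length, fun i => (s :: l').get (Fin.cast hlen i), ?_, ?_, ?_, ?_⟩
  · exact (List.nodup_iff_injective_get.mp h3).comp (Fin.cast_injective hlen)
  · rfl
  · have e1 : (s :: l').getLast? = some t := by
      rw [h2, List.getLast?_eq_getLast (l := s :: l) (by simp), hlast]
    have e2 : (s :: l').getLast? = some ((s :: l').getLast (by simp)) :=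
      List.getLast?_eq_getLast _
    rw [e1] at e2
    have e3 : (s :: l').getLast (by simp) = t := by
      injection e2.symm with e3
    rw [← e3, List.getLast_eq_getElem]
    congr 1
  · intro i
    show r ((s :: l').get (Fin.cast hlen i.castSucc)) ((s :: l').get (Fin.cast hlen i.succ))
    have hc' : List.Chain' r (s :: l') := h1
    have hrest := List.isChain_iff_getElem.mp hc'
    have e1 : (Fin.cast hlen i.castSucc) = ⟨i.val, hlen ▸ Nat.lt_succ_of_lt i.isLt⟩ := by
      ext; simp
    have e2 : (Fin.cast hlen i.succ) = ⟨i.val + 1, hlen ▸ Nat.succ_lt_succ i.isLt⟩ := by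
      ext; simp
    rw [e1, e2]
    exact hrest i.val (by simpa using i.isLt)

end MengerAux

namespace MengerAux
open Classical List

variable {E V : Type} [DecidableEq E] [DecidableEq V]

def relF (tl hd : E → V) (F : Finset E) (u v : V) : Prop :=
  (∃ e, e ∉ F ∧ tl e = u ∧ hd e = v) ∨ (∃ e ∈ F, tl e = v ∧ hd e = u)

lemma augment [Fintype E] (tl hd : E → V) (s t : V) (Hs : ∀ e, hd e ≠ s)
    (F : Finset E) (hF : IsFlow tl hd s t F)
    (haug : Relation.ReflTransGen (relF tl hd F) s t) (hst : s ≠ t) :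
    ∃ F' : Finset E, IsFlow tl hd s t F' ∧ outC tl F' s = outC tl F s + 1 := by
  obtain ⟨m, w, winj, hw0, hwl, hstep⟩ := exists_fn_path haug
  rcases m with _ | m
  · exact absurd (hw0.symm.trans (by rw [show (0 : Fin 1) = Fin.last 0 from rfl, hwl])) hst
  have hsel : ∀ i : Fin (m+1), ∃ e : E,
      (e ∉ F ∧ tl e = w i.castSucc ∧ hd e = w i.succ) ∨
      (e ∈ F ∧ tl e = w i.succ ∧ hd e = w i.castSucc) := by
    intro i
    rcases hstep i with ⟨e, h1, h2, h3⟩ | ⟨e, h1, h2, h3⟩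
    exacts [⟨e, Or.inl ⟨h1, h2, h3⟩⟩, ⟨e, Or.inr ⟨h1, h2, h3⟩⟩]
  choose ed hed using hsel
  have hfwd : ∀ i, ed i ∉ F → tl (ed i) = w i.castSucc ∧ hd (ed i) = w i.succ := by
    intro i hi
    rcases hed i with h | h
    exacts [h.2, absurd h.1 hi]
  have hbwd : ∀ i, ed i ∈ F → tl (ed i) = w i.succ ∧ hd (ed i) = w i.castSucc := by
    intro i hi
    rcases hed i with h | h
    exacts [absurd hi h.1, h.2]
  have edinj : Function.Injective ed := by
    intro i j hij
    by_cases hi : ed i ∈ F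
    · have hj : ed j ∈ F := hij ▸ hi
      have hw : w i.succ = w j.succ := by
        rw [← (hbwd i hi).1, hij, (hbwd j hj).1]
      exact Fin.succ_injective _ (winj hw)
    · have hj : ed j ∉ F := fun h => hi (hij ▸ h)
      have hw : w i.castSucc = w j.castSucc := by
        rw [← (hfwd i hi).1, hij, (hfwd j hj).1]
      exact Fin.castSucc_injective _ (winj hw)
  set fwdI := Finset.univ.filter (fun i : Fin (m+1) => ed i ∉ F) with hfwdI
  set bwdI := Finset.univ.filter (fun i : Fin (m+1) => ed i ∈ F) with hbwdI
  set A := fwdI.image ed with hA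
  set B := bwdI.image ed with hB
  have hAF : ∀ e ∈ A, e ∉ F := by
    intro e he
    obtain ⟨i, hi, rfl⟩ := Finset.mem_image.mp he
    exact (Finset.mem_filter.mp hi).2
  have hBF : B ⊆ F := by
    intro e he
    obtain ⟨i, hi, rfl⟩ := Finset.mem_image.mp he
    exact (Finset.mem_filter.mp hi).2
  refine ⟨(F ∪ A) \ B, ?_, ?_⟩
  all_goals {
  have hsplit : (F ∪ A) \ B = (F \ B) ∪ A := by
    ext x
    simp only [Finset.mem_sdiff, Finset.mem_union]
    constructor
    · rintro ⟨hx | hx, hxB⟩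
      exacts [Or.inl ⟨hx, hxB⟩, Or.inr hx]
    · rintro (⟨hx, hxB⟩ | hx)
      exacts [⟨Or.inl hx, hxB⟩, ⟨Or.inr hx, fun hxB => (hAF x hx) (hBF hxB)⟩]
  -- card identity for any predicate
  have cardid : ∀ q : E → Prop, ∀ inst : DecidablePred q,
      ((((F ∪ A) \ B).filter q).card + (bwdI.filter (fun i => q (ed i))).card
        = (F.filter q).card + (fwdI.filter (fun i => q (ed i))).card) := by
    intro q inst
    have hBq : (B.filter q) = (bwdI.filter (fun i => q (ed i))).image ed := by
      ext x
      simp only [Finset.mem_filter, Finset.mem_image, hB]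
      constructor
      · rintro ⟨⟨i, hi, rfl⟩, hq⟩
        exact ⟨i, ⟨hi, hq⟩, rfl⟩
      · rintro ⟨i, ⟨hi, hq⟩, rfl⟩
        exact ⟨⟨i, hi, rfl⟩, hq⟩
    have hAq : (A.filter q) = (fwdI.filter (fun i => q (ed i))).image ed := by
      ext x
      simp only [Finset.mem_filter, Finset.mem_image, hA]
      constructor
      · rintro ⟨⟨i, hi, rfl⟩, hq⟩
        exact ⟨i, ⟨hi, hq⟩, rfl⟩
      · rintro ⟨i, ⟨hi, hq⟩, rfl⟩
        exact ⟨⟨i, hi, rfl⟩, hq⟩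
    have hBcard : (B.filter q).card = (bwdI.filter (fun i => q (ed i))).card := by
      rw [hBq, Finset.card_image_of_injective _ edinj]
    have hAcard : (A.filter q).card = (fwdI.filter (fun i => q (ed i))).card := by
      rw [hAq, Finset.card_image_of_injective _ edinj]
    have h1 : ((F \ B) ∪ A).filter q = ((F \ B).filter q) ∪ (A.filter q) :=
      Finset.filter_union _ _ _
    have h2 : Disjoint ((F \ B).filter q) (A.filter q) := by
      rw [Finset.disjoint_left]
      intro x hx hx'
      exact hAF x (Finset.mem_filter.mp hx').1 (Finset.mem_sdiff.mp (Finset.mem_filter.mp hx).1).1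
    have h3 := filter_sdiff_card F B hBF q
    rw [hsplit, h1, Finset.card_union_of_disjoint h2, hAcard, ← hBcard]
    omega
  -- index counting
  have idx_count : ∀ v, v ≠ s → v ≠ t →
      (fwdI.filter (fun i => w i.succ = v)).card + (bwdI.filter (fun i => w i.succ = v)).card
      = (fwdI.filter (fun i => w i.castSucc = v)).card
        + (bwdI.filter (fun i => w i.castSucc = v)).card := by
    intro v hvs hvt
    have hsplit2 : ∀ P : Fin (m+1) → Prop, ∀ inst : DecidablePred P,
        (fwdI.filter P).card + (bwdI.filter P).card = (Finset.univ.filter P).card := by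
      intro P inst
      rw [← Finset.card_union_of_disjoint (by
        rw [Finset.disjoint_left]
        intro x hx hx'
        exact (Finset.mem_filter.mp (Finset.mem_filter.mp hx).1).2
          (Finset.mem_filter.mp (Finset.mem_filter.mp hx').1).2)]
      congr 1
      ext i
      simp only [Finset.mem_union, Finset.mem_filter, hfwdI, hbwdI, Finset.mem_univ, true_and]
      tauto
    rw [hsplit2 _ _, hsplit2 _ _]
    have e1 : (Finset.univ.filter (fun i : Fin (m+1) => w i.succ = v)).card
        = (Finset.univ.filter (fun j : Fin (m+2) => w j = v)).card := by
      apply Finset.card_bij (fun i _ => i.succ)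
      · intro i hi
        simp only [Finset.mem_filter, Finset.mem_univ, true_and] at hi ⊢
        exact hi
      · intro i _ j _ hij
        exact Fin.succ_injective _ hij
      · intro j hj
        simp only [Finset.mem_filter, Finset.mem_univ, true_and] at hj
        have hj0 : j ≠ 0 := by
          rintro rfl
          exact hvs (hj ▸ hw0.symm ▸ rfl)
        obtain ⟨i, rfl⟩ := Fin.exists_succ_eq.mpr hj0
        exact ⟨i, by simp only [Finset.mem_filter, Finset.mem_univ, true_and]; exact hj, rfl⟩
    have e2 : (Finset.univ.filter (fun i : Fin (m+1) => w i.castSucc = v)).card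
        = (Finset.univ.filter (fun j : Fin (m+2) => w j = v)).card := by
      apply Finset.card_bij (fun i _ => i.castSucc)
      · intro i hi
        simp only [Finset.mem_filter, Finset.mem_univ, true_and] at hi ⊢
        exact hi
      · intro i _ j _ hij
        exact Fin.castSucc_injective _ hij
      · intro j hj
        simp only [Finset.mem_filter, Finset.mem_univ, true_and] at hj
        have hjl : j ≠ Fin.last (m+1) := by
          rintro rfl
          exact hvt (hj ▸ hwl.symm ▸ rfl)
        obtain ⟨i, rfl⟩ := Fin.exists_castSucc_eq.mpr hjl
        exact ⟨i, by simp only [Finset.mem_filter, Finset.mem_univ, true_and]; exact hj, rfl⟩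
    rw [e1, e2]
  -- conservation congr: on fwdI, hd (ed i) = w i.succ etc.
  have cg1 : ∀ v, fwdI.filter (fun i => hd (ed i) = v) = fwdI.filter (fun i => w i.succ = v) := by
    intro v
    apply Finset.filter_congr
    intro i hi
    rw [(hfwd i (Finset.mem_filter.mp hi).2).2]
  have cg2 : ∀ v, fwdI.filter (fun i => tl (ed i) = v)
      = fwdI.filter (fun i => w i.castSucc = v) := by
    intro v
    apply Finset.filter_congr
    intro i hi
    rw [(hfwd i (Finset.mem_filter.mp hi).2).1]
  have cg3 : ∀ v, bwdI.filter (fun i => hd (ed i) = v)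
      = bwdI.filter (fun i => w i.castSucc = v) := by
    intro v
    apply Finset.filter_congr
    intro i hi
    rw [(hbwd i (Finset.mem_filter.mp hi).2).2]
  have cg4 : ∀ v, bwdI.filter (fun i => tl (ed i) = v)
      = bwdI.filter (fun i => w i.succ = v) := by
    intro v
    apply Finset.filter_congr
    intro i hi
    rw [(hbwd i (Finset.mem_filter.mp hi).2).1]
  first
  | -- IsFlow goal
    (intro v hvs hvt
     have hin := cardid (fun e => hd e = v) (by infer_instance)
     have hout := cardid (fun e => tl e = v) (by infer_instance)
     rw [cg1 v, cg3 v] at hin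
     rw [cg2 v, cg4 v] at hout
     have hic := idx_count v hvs hvt
     have hcons := hF v hvs hvt
     show inC hd ((F ∪ A) \ B) v = outC tl ((F ∪ A) \ B) v
     unfold inC outC at *
     omega)
  | -- value goal
    (have hin := cardid (fun e => tl e = s) (by infer_instance)
     rw [cg2 s, cg4 s] at hin
     have hz : (bwdI.filter (fun i => w i.succ = s)).card = 0 := by
       rw [Finset.card_eq_zero, Finset.filter_eq_empty_iff]
       intro i _
       intro hcon
       exact (Fin.succ_ne_zero i) (winj (hcon.trans hw0.symm))
     have ho : (fwdI.filter (fun i => w i.castSucc = s)).card = 1 := by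
       have h0f : (0 : Fin (m+1)) ∈ fwdI := by
         simp only [hfwdI, Finset.mem_filter, Finset.mem_univ, true_and]
         intro h0F
         have := (hbwd 0 h0F).2
         rw [Fin.castSucc_zero, hw0] at this
         exact Hs _ this
       have : fwdI.filter (fun i => w i.castSucc = s) = {0} := by
         ext i
         simp only [Finset.mem_filter, Finset.mem_singleton]
         constructor
         · rintro ⟨_, hi⟩
           have : i.castSucc = (0 : Fin (m+1)).castSucc := by
             apply winj
             rw [hi, Fin.castSucc_zero, hw0]
           exact Fin.castSucc_injective _ this
         · rintro rfl
           exact ⟨h0f, by rw [Fin.castSucc_zero, hw0]⟩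
       rw [this, Finset.card_singleton]
     show outC tl ((F ∪ A) \ B) s = outC tl F s + 1
     unfold outC at *
     omega)
  }

end MengerAux

namespace MengerAux
open Classical List

variable {E V : Type} [DecidableEq E] [DecidableEq V]

lemma chain_reach (Q : V → Prop) (tl hd : E → V) :
    ∀ p : List E, ChainsTo tl hd p → (∀ e ∈ p, Q (tl e) → Q (hd e)) →
    (∀ e ∈ p.head?, Q (tl e)) → ∀ e ∈ p.getLast?, Q (hd e) := by
  intro p
  induction p with
  | nil => simp
  | cons e q ih =>
    intro hc hQ hh x hx
    rcases q with _ | ⟨f, q'⟩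
    · simp only [getLast?_cons, getLast?_nil] at hx
      simp only [getLast?_singleton, Option.mem_def, Option.some.injEq] at hx
      subst hx
      exact hQ e (by simp) (hh e (by simp))
    · have h1 : Q (hd e) := hQ e (by simp) (hh e (by simp))
      have h2 : hd e = tl f := (List.isChain_cons_cons.mp hc).1
      apply ih (List.isChain_cons_cons.mp hc).2 (fun e' he' hq => hQ e' (by simp [he']) hq)
        (by intro y hy
            simp only [head?_cons, Option.mem_def, Option.some.injEq] at hy
            subst hy
            exact h2 ▸ h1)
      simpa [List.getLast?_cons_cons] using hx

theorem menger [Fintype E] [Fintype V] (tl hd : E → V) (s t : V)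
    (Hs : ∀ e, hd e ≠ s) (hst : s ≠ t) (k : ℕ)
    (hcut : ∀ C : Finset E, IsCut tl hd s t C → k ≤ C.card) :
    ∃ P : Fin k → List E, (∀ i, IsPathBetween tl hd s t (P i)) ∧
      (∀ i j, i ≠ j → ∀ x ∈ P i, x ∉ P j) := by
  classical
  obtain ⟨F, hFmem, hFmax⟩ := Finset.exists_max_image
    ((Finset.univ : Finset (Finset E)).filter (IsFlow tl hd s t)) (fun F => outC tl F s)
    ⟨∅, by
      simp only [Finset.mem_filter, Finset.mem_univ, true_and]
      intro v _ _
      simp [inC, outC]⟩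
  have hF : IsFlow tl hd s t F := (Finset.mem_filter.mp hFmem).2
  set R := (Finset.univ : Finset V).filter
    (fun v => Relation.ReflTransGen (relF tl hd F) s v) with hR
  have hsR : s ∈ R := by
    simp only [hR, Finset.mem_filter, Finset.mem_univ, true_and]
    exact Relation.ReflTransGen.refl
  have htR : t ∉ R := by
    simp only [hR, Finset.mem_filter, Finset.mem_univ, true_and]
    intro hreach
    obtain ⟨F', hF', hval'⟩ := augment tl hd s t Hs F hF hreach hst
    have := hFmax F' (by simp only [Finset.mem_filter, Finset.mem_univ, true_and]; exact hF')
    omega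
  set D := (Finset.univ : Finset E).filter (fun e => tl e ∈ R ∧ hd e ∉ R) with hD
  have hDF : D ⊆ F := by
    intro e he
    rw [hD, Finset.mem_filter] at he
    by_contra heF
    apply he.2.2
    rw [hR, Finset.mem_filter]
    refine ⟨Finset.mem_univ _, ?_⟩
    have h1 : tl e ∈ R := he.2.1
    rw [hR, Finset.mem_filter] at h1
    exact h1.2.tail (Or.inl ⟨e, heF, rfl, rfl⟩)
  have hback : ∀ e ∈ F, hd e ∈ R → tl e ∈ R := by
    intro e heF he
    rw [hR, Finset.mem_filter] at he ⊢
    exact ⟨Finset.mem_univ _, he.2.tail (Or.inr ⟨e, heF, rfl, rfl⟩)⟩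
  -- D is a cut
  have hDcut : IsCut tl hd s t D := by
    intro p ⟨hc, ⟨eh, heh, heh2⟩, ⟨el, hel, hel2⟩⟩
    by_contra hcon
    push_neg at hcon
    have hQstep : ∀ e ∈ p, tl e ∈ R → hd e ∈ R := by
      intro e he hQ
      by_contra hhd
      refine hcon e he ?_
      rw [hD, Finset.mem_filter]
      exact ⟨Finset.mem_univ _, hQ, hhd⟩
    have hhead : ∀ e ∈ p.head?, tl e ∈ R := by
      intro e he
      rw [heh] at he
      simp only [Option.mem_def, Option.some.injEq] at he
      subst he
      rw [heh2]
      exact hsR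
    have := chain_reach (fun v => v ∈ R) tl hd p hc hQstep hhead el hel
    rw [hel2] at this
    exact htR this
  -- value F = D.card
  have hvalD : outC tl F s = D.card := by
    have hX : (F.filter (fun e => tl e ∈ R)).card = ∑ v ∈ R, outC tl F v := by
      rw [Finset.card_eq_sum_card_fiberwise (f := tl) (s := F.filter (fun e => tl e ∈ R)) (t := R)
        (fun e he => (Finset.mem_filter.mp he).2)]
      apply Finset.sum_congr rfl
      intro v hv
      rw [Finset.filter_filter, outC]
      congr 1
      apply Finset.filter_congr
      intro e _
      exact ⟨fun h => h.2, fun h => ⟨h ▸ hv, h⟩⟩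
    have hY : (F.filter (fun e => hd e ∈ R)).card = ∑ v ∈ R, inC hd F v := by
      rw [Finset.card_eq_sum_card_fiberwise (f := hd) (s := F.filter (fun e => hd e ∈ R)) (t := R)
        (fun e he => (Finset.mem_filter.mp he).2)]
      apply Finset.sum_congr rfl
      intro v hv
      rw [Finset.filter_filter, inC]
      congr 1
      apply Finset.filter_congr
      intro e _
      exact ⟨fun h => h.2, fun h => ⟨h ▸ hv, h⟩⟩
    have sum_out : outC tl F s + ∑ v ∈ R.erase s, outC tl F v = ∑ v ∈ R, outC tl F v :=
      Finset.add_sum_erase R _ hsR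
    have sum_in : inC hd F s + ∑ v ∈ R.erase s, inC hd F v = ∑ v ∈ R, inC hd F v :=
      Finset.add_sum_erase R _ hsR
    have hins : inC hd F s = 0 := by
      rw [inC, Finset.card_eq_zero, Finset.filter_eq_empty_iff]
      intro e _
      exact Hs e
    have hsame : ∑ v ∈ R.erase s, inC hd F v = ∑ v ∈ R.erase s, outC tl F v := by
      apply Finset.sum_congr rfl
      intro v hv
      have hv1 : v ≠ s := (Finset.mem_erase.mp hv).1
      have hv2 : v ≠ t := by
        rintro rfl
        exact htR (Finset.mem_of_mem_erase hv)
      exact hF v hv1 hv2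
    have hXsplit : ((F.filter (fun e => tl e ∈ R)).filter (fun e => hd e ∈ R)).card
        + ((F.filter (fun e => tl e ∈ R)).filter (fun e => ¬ hd e ∈ R)).card
        = (F.filter (fun e => tl e ∈ R)).card :=
      Finset.card_filter_add_card_filter_not _
    have hYsplit : ((F.filter (fun e => hd e ∈ R)).filter (fun e => tl e ∈ R)).card
        + ((F.filter (fun e => hd e ∈ R)).filter (fun e => ¬ tl e ∈ R)).card
        = (F.filter (fun e => hd e ∈ R)).card :=
      Finset.card_filter_add_card_filter_not _
    have hYempty : (F.filter (fun e => hd e ∈ R)).filter (fun e => ¬ tl e ∈ R) = ∅ := by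
      rw [Finset.filter_eq_empty_iff]
      intro e he hcon2
      exact hcon2 (hback e (Finset.mem_filter.mp he).1 (Finset.mem_filter.mp he).2)
    have hc1 : (F.filter (fun e => hd e ∈ R)).filter (fun e => tl e ∈ R)
        = (F.filter (fun e => tl e ∈ R)).filter (fun e => hd e ∈ R) := by
      rw [Finset.filter_filter, Finset.filter_filter]
      apply Finset.filter_congr
      intro e _
      exact and_comm
    have hXD : (F.filter (fun e => tl e ∈ R)).filter (fun e => ¬ hd e ∈ R) = D := by
      ext e
      simp only [hD, Finset.filter_filter, Finset.mem_filter, Finset.mem_univ, true_and]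
      constructor
      · rintro ⟨hF1, h2, h3⟩
        exact ⟨h2, h3⟩
      · rintro ⟨h2, h3⟩
        refine ⟨hDF ?_, h2, h3⟩
        simp only [hD, Finset.mem_filter, Finset.mem_univ, true_and]
        exact ⟨h2, h3⟩
    rw [hXD] at hXsplit
    rw [hYempty, hc1] at hYsplit
    simp only [Finset.card_empty] at hYsplit
    omega
  have hk : k ≤ outC tl F s := by
    rw [hvalD]
    exact hcut D hDcut
  obtain ⟨P, h1, h2⟩ := flow_decomp tl hd s t Hs hst (outC tl F s) F hF rfl
  refine ⟨fun i => P (Fin.castLE hk i), fun i => (h1 _).1, ?_⟩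
  intro i j hij x hxi hxj
  exact h2 _ _ (fun h => hij (Fin.castLE_injective hk h)) x hxi hxj

end MengerAux

namespace MengerAux
open List

lemma tail_pred {α β : Type} (tl hd : α → β) :
    ∀ l : List α, List.Chain' (fun a b => hd a = tl b) l →
    ∀ x ∈ l.tail, ∃ z, tl x = hd z := by
  intro l
  induction l with
  | nil => simp
  | cons a l' ih =>
    intro hc x hx
    rcases l' with _ | ⟨b, l''⟩
    · simp at hx
    · simp only [List.tail_cons] at hx
      rcases List.mem_cons.mp hx with rfl | hx
      · exact ⟨a, ((List.isChain_cons_cons.mp hc).1).symm⟩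
      · exact ih (List.isChain_cons_cons.mp hc).2 x (by simpa using hx)

lemma all_inl {A B : Type} :
    ∀ l : List (A ⊕ B), (∀ x ∈ l, ∃ y, x = Sum.inl y) → ∃ q : List A, l = q.map Sum.inl := by
  intro l
  induction l with
  | nil => exact fun _ => ⟨[], rfl⟩
  | cons a l' ih =>
    intro h
    obtain ⟨q, hq⟩ := ih (fun x hx => h x (by simp [hx]))
    obtain ⟨y, hy⟩ := h a (by simp)
    exact ⟨y :: q, by rw [hy, hq]; rfl⟩

lemma last_split {α : Type} (Q : α → Prop) :
    ∀ p : List α, (∃ e ∈ p, Q e) →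
    ∃ (p₁ : List α) (e : α) (p₂ : List α), p = p₁ ++ e :: p₂ ∧ Q e ∧ ∀ x ∈ p₂, ¬ Q x := by
  intro p
  induction p with
  | nil => simp
  | cons a p' ih =>
    intro h
    by_cases h' : ∃ e ∈ p', Q e
    · obtain ⟨p₁, e, p₂, heq, hQ, hcl⟩ := ih h'
      exact ⟨a :: p₁, e, p₂, by rw [heq]; rfl, hQ, hcl⟩
    · push_neg at h'
      obtain ⟨e, he, hQ⟩ := h
      rcases List.mem_cons.mp he with rfl | he
      · exact ⟨[], e, p', rfl, hQ, h'⟩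
      · exact absurd hQ (h' e he)

end MengerAux


section Application

open MengerAux

variable (G : Network)

def superTl (G : Network) (ρ : Finset G.E) (w : ℕ) : (G.E ⊕ Fin w) → Option G.V :=
  Sum.elim (fun e => if e ∈ ρ then (none : Option G.V) else some (G.tl e)) (fun _ => none)

def superHd (G : Network) (ρ : Finset G.E) (w : ℕ) : (G.E ⊕ Fin w) → Option G.V :=
  Sum.elim (fun e => some (G.hd e)) (fun _ => some G.s)

lemma chain_super (G : Network) (ρ : Finset G.E) (w : ℕ) :
    ∀ l : List G.E, ChainsTo G.tl G.hd l → (∀ x ∈ l.tail, x ∉ ρ) →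
    List.Chain' (fun a b => superHd G ρ w a = superTl G ρ w b) (l.map Sum.inl) := by
  intro l
  induction l with
  | nil => simp [List.Chain']
  | cons a l' ih =>
    intro hc htail
    rcases l' with _ | ⟨b, l''⟩
    · simp [List.Chain']
    · rw [List.map_cons, List.map_cons]
      refine List.isChain_cons_cons.mpr ⟨?_, ?_⟩
      · have hb : b ∉ ρ := htail b (by simp)
        have hab : G.hd a = G.tl b := (List.isChain_cons_cons.mp hc).1
        show some (G.hd a) = superTl G ρ w (Sum.inl b)
        simp [superTl, hb, hab]
      · have := ih (List.isChain_cons_cons.mp hc).2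
          (fun x hx => htail x (List.mem_cons.mpr (Or.inr hx)))
        rw [List.map_cons] at this
        exact this

lemma super_chain_down (G : Network) (ρ : Finset G.E) (w : ℕ) :
    ∀ q : List G.E,
    List.Chain' (fun a b => superHd G ρ w (Sum.inl a) = superTl G ρ w (Sum.inl b)) q →
    ChainsTo G.tl G.hd q := by
  intro q hq
  apply List.IsChain.imp _ hq
  intro a b hab
  by_cases hb : b ∈ ρ
  · simp [superTl, superHd, hb] at hab
  · simp only [superTl, superHd, Sum.elim_inl, if_neg hb, Option.some.injEq] at hab
    exact hab

lemma super_cut (G : Network) (t : G.V) (ht : t ∈ G.T) (w : ℕ) (hwC : w ≤ G.minCut t)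
    (ρ : Finset G.E) (hcard : ρ.card = G.minCut t - w) (hrank : G.rankOf t ρ = G.minCut t - w)
    (C' : Finset (G.E ⊕ Fin w))
    (hC : IsCut (superTl G ρ w) (superHd G ρ w) none (some t) C') :
    w + (G.minCut t - w) ≤ C'.card := by
  classical
  set B := (Finset.univ : Finset G.E).filter (fun e => Sum.inl e ∈ C') with hB
  have hBmem : ∀ y : G.E, Sum.inl y ∈ C' → y ∈ B := by
    intro y hy
    rw [hB, Finset.mem_filter]
    exact ⟨Finset.mem_univ _, hy⟩
  have hBsub : B.image Sum.inl ⊆ C' := by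
    intro x hx
    obtain ⟨y, hy, rfl⟩ := Finset.mem_image.mp hx
    exact (Finset.mem_filter.mp hy).2
  by_cases hall : ∀ i : Fin w, Sum.inr i ∈ C'
  · -- B is a cut between s_ρ and t in the rank graph
    have hBcut : IsCut (fun e => if e ∈ ρ then (none : Option G.V) else some (G.tl e))
        (fun e => some (G.hd e)) none (some t) B := by
      rintro q ⟨hc, ⟨eh, heh, heh2⟩, ⟨el, hel, hel2⟩⟩
      have hpath : IsPathBetween (superTl G ρ w) (superHd G ρ w) none (some t)
          (q.map Sum.inl) := by
        refine ⟨?_, ?_, ?_⟩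
        · rw [ChainsTo, List.Chain', List.isChain_map]
          exact hc
        · refine ⟨Sum.inl eh, ?_, heh2⟩
          rw [List.head?_map]
          simp only [Option.mem_def] at heh ⊢
          rw [heh]
          rfl
        · refine ⟨Sum.inl el, ?_, hel2⟩
          rw [List.getLast?_map]
          simp only [Option.mem_def] at hel ⊢
          rw [hel]
          rfl
      obtain ⟨x, hx, hxC⟩ := hC _ hpath
      obtain ⟨y, hy, rfl⟩ := List.mem_map.mp hx
      exact ⟨y, hy, hBmem y hxC⟩
    have hδB : G.minCut t - w ≤ B.card := by
      rw [← hrank, Network.rankOf, minCutGen]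
      exact Nat.sInf_le ⟨B, hBcut, rfl⟩
    have hsub : (Finset.univ.image (Sum.inr : Fin w → G.E ⊕ Fin w)) ∪ B.image Sum.inl ⊆ C' := by
      intro x hx
      rcases Finset.mem_union.mp hx with hx | hx
      · obtain ⟨i, _, rfl⟩ := Finset.mem_image.mp hx
        exact hall i
      · exact hBsub hx
    have hdisj : Disjoint (Finset.univ.image (Sum.inr : Fin w → G.E ⊕ Fin w))
        (B.image Sum.inl) := by
      rw [Finset.disjoint_left]
      intro x hx hx'
      obtain ⟨i, _, rfl⟩ := Finset.mem_image.mp hx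
      obtain ⟨y, _, h⟩ := Finset.mem_image.mp hx'
      exact Sum.inl_ne_inr h
    have h1 := Finset.card_le_card hsub
    rw [Finset.card_union_of_disjoint hdisj,
      Finset.card_image_of_injective _ Sum.inr_injective,
      Finset.card_image_of_injective _ Sum.inl_injective, Finset.card_univ,
      Fintype.card_fin] at h1
    omega
  · push_neg at hall
    obtain ⟨i, hi⟩ := hall
    have hBcut : IsCut G.tl G.hd G.s t B := by
      rintro p ⟨hc, ⟨eh, heh, heh2⟩, ⟨el, hel, hel2⟩⟩
      have hpne : p ≠ [] := by
        intro h
        rw [h] at heh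
        simp at heh
      by_cases hmem : ∃ e ∈ p, e ∈ ρ
      · obtain ⟨p₁, e, p₂, heq, heρ, hcl⟩ := last_split (· ∈ ρ) p hmem
        have hsuf : ChainsTo G.tl G.hd (e :: p₂) := hc.suffix ⟨p₁, heq.symm⟩
        have hlast : (e :: p₂).getLast? = some ((e :: p₂).getLast (by simp)) :=
          List.getLast?_eq_getLast _
        have hlastp : p.getLast? = some ((e :: p₂).getLast (by simp)) := by
          rw [heq, List.getLast?_append, hlast]
          rfl
        have helval : el = (e :: p₂).getLast (by simp) := by
          simp only [Option.mem_def] at hel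
          rw [hel] at hlastp
          injection hlastp
        have hpath : IsPathBetween (superTl G ρ w) (superHd G ρ w) none (some t)
            ((e :: p₂).map Sum.inl) := by
          refine ⟨chain_super G ρ w (e :: p₂) hsuf (by simpa using hcl), ?_, ?_⟩
          · refine ⟨Sum.inl e, by simp, ?_⟩
            show superTl G ρ w (Sum.inl e) = none
            simp [superTl, heρ]
          · refine ⟨Sum.inl ((e :: p₂).getLast (by simp)), ?_, ?_⟩
            · rw [List.getLast?_map, hlast]
              rfl
            · show some (G.hd ((e :: p₂).getLast (by simp))) = some t
              rw [← helval, hel2]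
        obtain ⟨x, hx, hxC⟩ := hC _ hpath
        obtain ⟨y, hy, rfl⟩ := List.mem_map.mp hx
        refine ⟨y, ?_, hBmem y hxC⟩
        rw [heq]
        exact List.mem_append_right _ hy
      · push_neg at hmem
        have hpath : IsPathBetween (superTl G ρ w) (superHd G ρ w) none (some t)
            (Sum.inr i :: p.map Sum.inl) := by
          refine ⟨?_, ?_, ?_⟩
          · apply List.isChain_cons.mpr
            refine ⟨?_, chain_super G ρ w p hc
              (fun x hx => hmem x (List.mem_of_mem_tail hx))⟩
            intro y hy
            rw [List.head?_map] at hy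
            simp only [Option.mem_def] at heh
            rw [heh] at hy
            simp only [Option.map_some, Option.mem_def, Option.some.injEq] at hy
            subst hy
            show superHd G ρ w (Sum.inr i) = superTl G ρ w (Sum.inl eh)
            have hehp : eh ∈ p := List.mem_of_mem_head? heh
            simp [superHd, superTl, hmem eh hehp, heh2]
          · exact ⟨Sum.inr i, by simp, rfl⟩
          · have hlast : p.getLast? = some (p.getLast hpne) := List.getLast?_eq_getLast _
            refine ⟨Sum.inl (p.getLast hpne), ?_, ?_⟩
            · show (Sum.inr i :: p.map Sum.inl).getLast? = some (Sum.inl (p.getLast hpne))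
              have : Sum.inr i :: p.map Sum.inl = [Sum.inr i] ++ p.map Sum.inl := rfl
              rw [this, List.getLast?_append, List.getLast?_map, hlast]
              rfl
            · show some (G.hd (p.getLast hpne)) = some t
              simp only [Option.mem_def] at hel
              rw [hlast] at hel
              injection hel with hel'
              rw [hel', hel2]
        obtain ⟨x, hx, hxC⟩ := hC _ hpath
        rcases List.mem_cons.mp hx with rfl | hx
        · exact absurd hxC hi
        · obtain ⟨y, hy, rfl⟩ := List.mem_map.mp hx
          exact ⟨y, hy, hBmem y hxC⟩
    have hmB : G.minCut t ≤ B.card := by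
      rw [Network.minCut, minCutGen]
      exact Nat.sInf_le ⟨B, hBcut, rfl⟩
    have h1 := Finset.card_le_card hBsub
    rw [Finset.card_image_of_injective _ Sum.inl_injective] at h1
    omega

end Application

theorem statement4 (G : Network) (t : G.V) (ht : t ∈ G.T) (w : ℕ)
    (hw1 : 1 ≤ w) (hwC : w ≤ G.minCut t)
    (ρ : Finset G.E) (hρ : ρ ∈ G.R t (G.minCut t - w)) :
    ∃ (P1 : {e : G.E // e ∈ ρ} → List G.E) (P2 : Fin w → List G.E),
      (∀ e, ChainsTo G.tl G.hd (P1 e) ∧ (P1 e).head? = some e.1 ∧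
        ∃ e' ∈ (P1 e).getLast?, G.hd e' = t) ∧
      (∀ j, IsPathBetween G.tl G.hd G.s t (P2 j)) ∧
      (∀ e e', e ≠ e' → ∀ x ∈ P1 e, x ∉ P1 e') ∧
      (∀ j j', j ≠ j' → ∀ x ∈ P2 j, x ∉ P2 j') ∧
      (∀ e j, ∀ x ∈ P1 e, x ∉ P2 j) := by
  classical
  obtain ⟨hcard, hrank⟩ := hρ
  have Hs : ∀ x : G.E ⊕ Fin w, superHd G ρ w x ≠ none := by
    rintro (e | i) <;> simp [superHd]
  have hst : (none : Option G.V) ≠ some t := by simp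
  obtain ⟨P, hP, hPdisj⟩ := MengerAux.menger (superTl G ρ w) (superHd G ρ w) none (some t)
    Hs hst (w + (G.minCut t - w))
    (fun C' hC' => super_cut G t ht w hwC ρ hcard hrank C' hC')
  have hne : ∀ j, P j ≠ [] := by
    intro j h
    obtain ⟨_, ⟨e, he, _⟩, _⟩ := hP j
    rw [h] at he
    simp at he
  set f : Fin (w + (G.minCut t - w)) → G.E ⊕ Fin w := fun j => (P j).head (hne j) with hf
  have hf_head? : ∀ j, (P j).head? = some (f j) := fun j => List.head?_eq_head _
  have hf_mem : ∀ j, f j ∈ P j := fun j => List.head_mem _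
  have hf0 : ∀ j, superTl G ρ w (f j) = none := by
    intro j
    obtain ⟨_, ⟨e, he, he2⟩, _⟩ := hP j
    simp only [Option.mem_def, hf_head? j, Option.some.injEq] at he
    rw [← he] at he2
    exact he2
  have finj : Function.Injective f := by
    intro j j' h
    by_contra hjj
    exact hPdisj j j' hjj (f j) (hf_mem j) (h ▸ hf_mem j')
  set S₀ := (Finset.univ : Finset (G.E ⊕ Fin w)).filter
    (fun x => superTl G ρ w x = none) with hS₀def
  have hS₀ : S₀ = ρ.image Sum.inl ∪ Finset.univ.image Sum.inr := by
    ext x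
    rcases x with e | i
    · rw [hS₀def, Finset.mem_filter]
      simp only [Finset.mem_filter, Finset.mem_union,
        Finset.mem_image, superTl, Sum.elim_inl]
      constructor
      · intro h
        by_cases he : e ∈ ρ
        · exact Or.inl ⟨e, he, rfl⟩
        · exfalso
          have h2 := h.2
          rw [if_neg he] at h2
          simp at h2
      · rintro (⟨y, hy, hEq⟩ | ⟨y, hy, hEq⟩)
        · obtain rfl : y = e := Sum.inl_injective hEq
          exact ⟨Finset.mem_univ _, if_pos hy⟩
        · simp at hEq
    · rw [hS₀def, Finset.mem_filter]
      simp [superTl]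
  have hS₀card : S₀.card = (G.minCut t - w) + w := by
    rw [hS₀, Finset.card_union_of_disjoint (by
      rw [Finset.disjoint_left]
      intro x hx hx'
      obtain ⟨y, _, rfl⟩ := Finset.mem_image.mp hx
      obtain ⟨z, _, h⟩ := Finset.mem_image.mp hx'
      exact Sum.inl_ne_inr h.symm),
      Finset.card_image_of_injective _ Sum.inl_injective,
      Finset.card_image_of_injective _ Sum.inr_injective, Finset.card_univ,
      Fintype.card_fin, hcard]
  have himg : Finset.univ.image f = S₀ := by
    apply Finset.eq_of_subset_of_card_le
    · intro x hx
      obtain ⟨j, _, rfl⟩ := Finset.mem_image.mp hx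
      rw [hS₀def, Finset.mem_filter]
      exact ⟨Finset.mem_univ _, hf0 j⟩
    · rw [Finset.card_image_of_injective _ finj, Finset.card_univ, Fintype.card_fin, hS₀card]
      omega
  have hsurj : ∀ x ∈ S₀, ∃ j, f j = x := by
    intro x hx
    rw [← himg] at hx
    obtain ⟨j, _, hj⟩ := Finset.mem_image.mp hx
    exact ⟨j, hj⟩
  have hq : ∀ j, ∃ q : List G.E, (P j).tail = q.map Sum.inl ∧ ∀ x ∈ q, x ∉ ρ := by
    intro j
    have htail : ∀ x ∈ (P j).tail, ∃ v : G.V, superTl G ρ w x = some v := by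
      intro x hx
      obtain ⟨z, hz⟩ := MengerAux.tail_pred (superTl G ρ w) (superHd G ρ w) (P j)
        (hP j).1 x hx
      rcases hz2 : superHd G ρ w z with _ | v
      · exact absurd hz2 (Hs z)
      · exact ⟨v, by rw [hz, hz2]⟩
    have hinl : ∀ x ∈ (P j).tail, ∃ y, x = Sum.inl y := by
      intro x hx
      obtain ⟨v, hv⟩ := htail x hx
      rcases x with y | i
      · exact ⟨y, rfl⟩
      · simp [superTl] at hv
    obtain ⟨q, hq⟩ := MengerAux.all_inl _ hinl
    refine ⟨q, hq, ?_⟩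
    intro x hx
    have hmem : Sum.inl x ∈ (P j).tail := by
      rw [hq]
      exact List.mem_map_of_mem hx
    obtain ⟨v, hv⟩ := htail _ hmem
    intro hxρ
    simp [superTl, hxρ] at hv
  choose qf hqf1 hqf2 using hq
  have hPfull : ∀ j, P j = f j :: (P j).tail := fun j => (List.cons_head_tail (hne j)).symm
  -- path properties of the stripped lists
  have hstrip : ∀ (j : Fin (w + (G.minCut t - w))) (a : G.E), f j = Sum.inl a →
      ChainsTo G.tl G.hd (a :: qf j) ∧
      ∃ e' ∈ (a :: qf j).getLast?, G.hd e' = t := by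
    intro j a ha
    have hPj : P j = (a :: qf j).map Sum.inl := by
      rw [hPfull j, ha, hqf1 j]
      rfl
    have hchain : List.Chain'
        (fun x y => superHd G ρ w x = superTl G ρ w y) ((a :: qf j).map Sum.inl) := by
      rw [← hPj]
      exact (hP j).1
    constructor
    · exact super_chain_down G ρ w _ ((List.isChain_map _).mp hchain)
    · obtain ⟨_, _, ⟨el, hel, hel2⟩⟩ := hP j
      rw [hPj, List.getLast?_map] at hel
      have hlast : (a :: qf j).getLast? = some ((a :: qf j).getLast (by simp)) :=
        List.getLast?_eq_getLast _
      rw [hlast] at hel ⊢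
      simp only [Option.map_some, Option.mem_def, Option.some.injEq] at hel
      refine ⟨(a :: qf j).getLast (by simp), rfl, ?_⟩
      rw [← hel] at hel2
      have : superHd G ρ w (Sum.inl ((a :: qf j).getLast (by simp))) = some t := hel2
      simpa [superHd] using this
  -- choose indices
  have hj1 : ∀ e : {e : G.E // e ∈ ρ}, ∃ j, f j = Sum.inl e.1 := by
    intro e
    apply hsurj
    rw [hS₀]
    exact Finset.mem_union_left _ (Finset.mem_image.mpr ⟨e.1, e.2, rfl⟩)
  choose j1 hj1 using hj1
  have hj2 : ∀ i : Fin w, ∃ j, f j = Sum.inr i := by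
    intro i
    apply hsurj
    rw [hS₀]
    exact Finset.mem_union_right _ (Finset.mem_image.mpr ⟨i, Finset.mem_univ _, rfl⟩)
  choose j2 hj2 using hj2
  refine ⟨fun e => e.1 :: qf (j1 e), fun i => qf (j2 i), ?_, ?_, ?_, ?_, ?_⟩
  · -- P1 properties
    intro e
    obtain ⟨h1, h2⟩ := hstrip (j1 e) e.1 (hj1 e)
    exact ⟨h1, rfl, h2⟩
  · -- P2 properties
    intro i
    have hPj : P (j2 i) = Sum.inr i :: (qf (j2 i)).map Sum.inl := by
      rw [hPfull (j2 i), hj2 i, hqf1 (j2 i)]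
    have hqne : qf (j2 i) ≠ [] := by
      intro h
      obtain ⟨_, _, ⟨el, hel, hel2⟩⟩ := hP (j2 i)
      rw [hPj, h] at hel
      simp only [List.map_nil, List.getLast?_singleton, Option.mem_def,
        Option.some.injEq] at hel
      rw [← hel] at hel2
      have : some G.s = some t := hel2
      injection this with h2
      exact G.s_not_sink (h2 ▸ ht)
    show IsPathBetween G.tl G.hd G.s t (qf (j2 i))
    rcases hqe : qf (j2 i) with _ | ⟨b, q'⟩
    · exact absurd hqe hqne
    rw [hqe] at hPj
    have hchainP := (hP (j2 i)).1
    rw [ChainsTo, hPj, List.map_cons] at hchainP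
    obtain ⟨hlink, hrest⟩ := List.isChain_cons_cons.mp hchainP
    have hb : b ∉ ρ ∧ G.tl b = G.s := by
      by_cases hbρ : b ∈ ρ
      · simp [superHd, superTl, hbρ] at hlink
      · simp only [superHd, superTl, Sum.elim_inr, Sum.elim_inl, if_neg hbρ,
          Option.some.injEq] at hlink
        exact ⟨hbρ, hlink.symm⟩
    refine ⟨?_, ?_, ?_⟩
    · have : List.Chain' (fun x y => superHd G ρ w x = superTl G ρ w y)
          ((b :: q').map Sum.inl) := by
        rw [List.map_cons]
        exact hrest
      exact super_chain_down G ρ w _ ((List.isChain_map _).mp this)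
    · exact ⟨b, by simp, hb.2⟩
    · obtain ⟨_, _, ⟨el, hel, hel2⟩⟩ := hP (j2 i)
      rw [hPj] at hel
      have : (Sum.inr i :: (b :: q').map Sum.inl).getLast? =
          ((b :: q').map Sum.inl).getLast? := by
        rw [List.map_cons, List.getLast?_cons_cons]
      rw [this, List.getLast?_map] at hel
      have hlast : (b :: q').getLast? = some ((b :: q').getLast (by simp)) :=
        List.getLast?_eq_getLast _
      rw [hlast] at hel ⊢
      simp only [Option.map_some, Option.mem_def, Option.some.injEq] at hel
      refine ⟨(b :: q').getLast (by simp), rfl, ?_⟩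
      rw [← hel] at hel2
      have : superHd G ρ w (Sum.inl ((b :: q').getLast (by simp))) = some t := hel2
      simpa [superHd] using this
  · -- P1 vs P1 disjoint
    intro e e' hee x hx hx'
    have hjj : j1 e ≠ j1 e' := by
      intro h
      apply hee
      have := (hj1 e).symm.trans (h ▸ hj1 e')
      exact Subtype.ext (Sum.inl_injective this)
    have hm1 : Sum.inl x ∈ P (j1 e) := by
      rw [hPfull (j1 e), hj1 e, hqf1 (j1 e)]
      rcases List.mem_cons.mp hx with rfl | hx
      · exact List.mem_cons_self
      · exact List.mem_cons.mpr (Or.inr (List.mem_map_of_mem hx))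
    have hm2 : Sum.inl x ∈ P (j1 e') := by
      rw [hPfull (j1 e'), hj1 e', hqf1 (j1 e')]
      rcases List.mem_cons.mp hx' with rfl | hx'
      · exact List.mem_cons_self
      · exact List.mem_cons.mpr (Or.inr (List.mem_map_of_mem hx'))
    exact hPdisj _ _ hjj _ hm1 hm2
  · -- P2 vs P2 disjoint
    intro i i' hii x hx hx'
    have hjj : j2 i ≠ j2 i' := by
      intro h
      apply hii
      have := (hj2 i).symm.trans (h ▸ hj2 i')
      exact Sum.inr_injective this
    have hm1 : Sum.inl x ∈ P (j2 i) := by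
      rw [hPfull (j2 i), hqf1 (j2 i)]
      exact List.mem_cons.mpr (Or.inr (List.mem_map_of_mem hx))
    have hm2 : Sum.inl x ∈ P (j2 i') := by
      rw [hPfull (j2 i'), hqf1 (j2 i')]
      exact List.mem_cons.mpr (Or.inr (List.mem_map_of_mem hx'))
    exact hPdisj _ _ hjj _ hm1 hm2
  · -- P1 vs P2 disjoint
    intro e i x hx hx'
    have hjj : j1 e ≠ j2 i := by
      intro h
      have := (hj1 e).symm.trans (h ▸ hj2 i)
      exact Sum.inl_ne_inr this
    have hm1 : Sum.inl x ∈ P (j1 e) := by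
      rw [hPfull (j1 e), hj1 e, hqf1 (j1 e)]
      rcases List.mem_cons.mp hx with rfl | hx
      · exact List.mem_cons_self
      · exact List.mem_cons.mpr (Or.inr (List.mem_map_of_mem hx))
    have hm2 : Sum.inl x ∈ P (j2 i) := by
      rw [hPfull (j2 i), hqf1 (j2 i)]
      exact List.mem_cons.mpr (Or.inr (List.mem_map_of_mem hx'))
    exact hPdisj _ _ hjj _ hm1 hm2
end

section
/- Let G be a network and t a sink node. For all nonnegative integers β and δ with β ≤ δ ≤ ⌊C_t/2⌋, one has |R_t(β)| ≤ |R_t(δ)|. -/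
open scoped BigOperators

/- auxiliary development -/


open Classical

section Lists

variable {α : Type} {P : α → Prop}

/-- split a list at the last element satisfying `P`. -/
lemma last_mem_split : ∀ (p : List α), (∃ x ∈ p, P x) →
    ∃ q d r, p = q ++ d :: r ∧ P d ∧ ∀ x ∈ r, ¬ P x := by
  intro p
  induction p with
  | nil => rintro ⟨x, hx, -⟩; exact absurd hx (List.not_mem_nil (a := x))
  | cons a p ih =>
    intro h
    by_cases h' : ∃ x ∈ p, P x
    · obtain ⟨q, d, r, rfl, hd, hr⟩ := ih h'
      exact ⟨a :: q, d, r, rfl, hd, hr⟩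
    · push_neg at h'
      obtain ⟨x, hx, hPx⟩ := h
      rcases List.mem_cons.1 hx with rfl | hx
      · exact ⟨[], x, p, rfl, hPx, h'⟩
      · exact absurd hPx (h' x hx)

/-- split a list at the first element satisfying `P`. -/
lemma first_mem_split : ∀ (p : List α), (∃ x ∈ p, P x) →
    ∃ q d r, p = q ++ d :: r ∧ P d ∧ ∀ x ∈ q, ¬ P x := by
  intro p
  induction p with
  | nil => rintro ⟨x, hx, -⟩; exact absurd hx (List.not_mem_nil (a := x))
  | cons a p ih =>
    intro h
    by_cases ha : P a
    · exact ⟨[], a, p, rfl, ha, by simp⟩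
    · obtain ⟨x, hx, hPx⟩ := h
      rcases List.mem_cons.1 hx with rfl | hx
      · exact absurd hPx ha
      · obtain ⟨q, d, r, rfl, hd, hq⟩ := ih ⟨x, hx, hPx⟩
        refine ⟨a :: q, d, r, rfl, hd, ?_⟩
        intro y hy
        rcases List.mem_cons.1 hy with rfl | hy
        · exact ha
        · exact hq y hy

lemma chain'_imp_mem {R R' : α → α → Prop} :
    ∀ {l : List α}, List.Chain' R l → (∀ a b, b ∈ l.tail → R a b → R' a b) → List.Chain' R' l := by
  intro l
  induction l with
  | nil => intro _ _; exact List.isChain_nil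
  | cons a l ih =>
    intro h himp
    rcases l with - | ⟨b, l'⟩
    · exact List.isChain_singleton a
    · unfold List.Chain' at h ⊢; rw [List.isChain_cons_cons] at h ⊢
      exact ⟨himp a b (by simp) h.1, ih h.2 (fun x y hy => himp x y (by simp; right; exact hy))⟩

end Lists

namespace Network

variable (G : Network) (t : G.V)

/-- `p` is a path (in the original graph) starting with the channel `e` and ending at `t`. -/
def PFrom (e : G.E) (p : List G.E) : Prop :=
  ChainsTo G.tl G.hd p ∧ p.head? = some e ∧ ∃ l ∈ p.getLast?, G.hd l = t

/-- `C` is a cut for the error pattern `ρ` (original-graph formulation). -/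
def CutF (ρ C : Finset G.E) : Prop :=
  ∀ e ∈ ρ, ∀ p : List G.E, G.PFrom t e p → ∃ c ∈ p, c ∈ C

variable {G t}

lemma pfrom_cons {e : G.E} {p : List G.E} (h : G.PFrom t e p) :
    ∃ q, p = e :: q := by
  rcases p with - | ⟨a, q⟩
  · simp [PFrom] at h
  · obtain ⟨-, h2, -⟩ := h
    simp at h2
    exact ⟨q, by rw [h2]⟩

/-- a suffix (starting at a given member) of a path to `t` is a path to `t`. -/
lemma pfrom_suffix {e : G.E} {p q r : List G.E} (h : G.PFrom t e p)
    (hp : p = q ++ r) (hr : r ≠ []) :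
    ∃ d, r.head? = some d ∧ G.PFrom t d r := by
  obtain ⟨hc, hh, hl⟩ := h
  subst hp
  obtain ⟨d, hd⟩ := List.exists_mem_of_ne_nil r hr
  rcases r with - | ⟨d', r'⟩
  · exact absurd rfl hr
  refine ⟨d', rfl, ?_, rfl, ?_⟩
  · exact (List.isChain_append.1 hc).2.1
  · rwa [List.getLast?_append_of_ne_nil _ hr] at hl

theorem cutF_iff (ρ C : Finset G.E) :
    IsCut (fun e => if e ∈ ρ then (none : Option G.V) else some (G.tl e))
      (fun e => some (G.hd e)) (none : Option G.V) (some t) C ↔ G.CutF t ρ C := by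
  constructor
  · intro hcut e he p hp
    -- take the suffix of `p` starting at its last element in `ρ`
    obtain ⟨q, d, r, hpqr, hdρ, hr⟩ :=
      last_mem_split (P := fun x => x ∈ ρ) p
        ⟨e, List.mem_of_mem_head? (by rw [hp.2.1]; rfl), he⟩
    obtain ⟨d', hd', hpf⟩ := pfrom_suffix hp hpqr (by simp)
    simp at hd'
    subst hd'
    have : IsPathBetween (fun e => if e ∈ ρ then (none : Option G.V) else some (G.tl e))
        (fun e => some (G.hd e)) none (some t) (d :: r) := by
      refine ⟨?_, ⟨d, rfl, by simp [hdρ]⟩, ?_⟩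
      · refine chain'_imp_mem (R := fun a b => G.hd a = G.tl b) hpf.1 ?_
        intro a b hb hab
        have hbρ : b ∉ ρ := hr b hb
        simp [hbρ, hab]
      · obtain ⟨l, hl1, hl2⟩ := hpf.2.2
        exact ⟨l, hl1, by simp [hl2]⟩
    obtain ⟨c, hc1, hc2⟩ := hcut _ this
    exact ⟨c, by rw [hpqr]; exact List.mem_append_right q hc1, hc2⟩
  · intro hcut p hp
    obtain ⟨hc, ⟨e, he1, he2⟩, hl⟩ := hp
    have heρ : e ∈ ρ := by
      by_contra h
      simp [h] at he2
    refine hcut e heρ p ⟨?_, he1, ?_⟩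
    · refine chain'_imp_mem hc ?_
      intro a b _ hab
      by_cases hb : b ∈ ρ
      · simp [hb] at hab
      · simp [hb] at hab; exact hab
    · obtain ⟨l, hl1, hl2⟩ := hl
      simp at hl2
      exact ⟨l, hl1, hl2⟩

end Network

namespace Network

variable {G : Network} {t : G.V}

theorem rankOf_eq (ρ : Finset G.E) :
    G.rankOf t ρ = sInf {n | ∃ C : Finset G.E, G.CutF t ρ C ∧ C.card = n} := by
  unfold rankOf minCutGen
  congr 1
  ext n
  exact ⟨fun ⟨C, h1, h2⟩ => ⟨C, (cutF_iff ρ C).1 h1, h2⟩,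
    fun ⟨C, h1, h2⟩ => ⟨C, (cutF_iff ρ C).2 h1, h2⟩⟩

lemma cutF_univ (ρ : Finset G.E) : G.CutF t ρ Finset.univ := by
  intro e _ p hp
  exact ⟨e, List.mem_of_mem_head? (by rw [hp.2.1]; rfl), Finset.mem_univ e⟩

lemma rank_le_of_cut {ρ C : Finset G.E} (h : G.CutF t ρ C) : G.rankOf t ρ ≤ C.card := by
  rw [rankOf_eq]
  exact Nat.sInf_le ⟨C, h, rfl⟩

lemma exists_min_cut (ρ : Finset G.E) :
    ∃ C : Finset G.E, G.CutF t ρ C ∧ C.card = G.rankOf t ρ := by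
  have hne : {n | ∃ C : Finset G.E, G.CutF t ρ C ∧ C.card = n}.Nonempty :=
    ⟨_, Finset.univ, cutF_univ ρ, rfl⟩
  have := Nat.sInf_mem hne
  rw [← rankOf_eq] at this
  exact this

lemma rank_mono {ρ σ : Finset G.E} (h : ρ ⊆ σ) : G.rankOf t ρ ≤ G.rankOf t σ := by
  obtain ⟨C, hC, hcard⟩ := exists_min_cut (t := t) σ
  rw [← hcard]
  exact rank_le_of_cut (fun e he => hC e (h he))

lemma rank_insert_le (ρ : Finset G.E) (e : G.E) :
    G.rankOf t (insert e ρ) ≤ G.rankOf t ρ + 1 := by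
  obtain ⟨C, hC, hcard⟩ := exists_min_cut (t := t) ρ
  have : G.CutF t (insert e ρ) (insert e C) := by
    intro e' he' p hp
    rcases Finset.mem_insert.1 he' with rfl | he'
    · exact ⟨e', List.mem_of_mem_head? (by rw [hp.2.1]; rfl), Finset.mem_insert_self e' C⟩
    · obtain ⟨c, hc1, hc2⟩ := hC e' he' p hp
      exact ⟨c, hc1, Finset.mem_insert_of_mem hc2⟩
  calc G.rankOf t (insert e ρ) ≤ (insert e C).card := rank_le_of_cut this
    _ ≤ C.card + 1 := Finset.card_insert_le e C
    _ = G.rankOf t ρ + 1 := by rw [hcard]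

/-- subsets of `In(t)` have rank equal to their cardinality. -/
lemma rank_in_t {S : Finset G.E} (hS : ∀ e ∈ S, G.hd e = t) :
    G.rankOf t S = S.card := by
  apply le_antisymm
  · exact rank_le_of_cut (fun e he p hp =>
      ⟨e, List.mem_of_mem_head? (by rw [hp.2.1]; rfl), he⟩)
  · obtain ⟨C, hC, hcard⟩ := exists_min_cut (t := t) S
    rw [← hcard]
    apply Finset.card_le_card
    intro e he
    have hp : G.PFrom t e [e] :=
      ⟨List.isChain_singleton e, rfl, ⟨e, rfl, hS e he⟩⟩
    obtain ⟨c, hc1, hc2⟩ := hC e he [e] hp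
    simp at hc1
    rwa [hc1] at hc2

/-- the in-channels of `t` form a cut between `s` and `t`. -/
lemma minCut_le_in_t : G.minCut t ≤ (Finset.univ.filter (fun e => G.hd e = t)).card := by
  unfold minCut minCutGen
  apply Nat.sInf_le
  refine ⟨_, ?_, rfl⟩
  intro p hp
  obtain ⟨l, hl1, hl2⟩ := hp.2.2
  exact ⟨l, List.mem_of_mem_getLast? hl1, Finset.mem_filter.2 ⟨Finset.mem_univ l, hl2⟩⟩

end Network

namespace Network

variable (G : Network) (t : G.V)

/-- The set of channels all of whose paths to `t` meet `C`. -/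
def WOf (C : Finset G.E) : Set G.E := {d | ∀ p, G.PFrom t d p → ∃ c ∈ p, c ∈ C}

def Satur (W : Set G.E) : Prop := ∀ d ∉ W, ∃ p, G.PFrom t d p ∧ ∀ x ∈ p, x ∉ W

/-- The "boundary" of a set of channels `W`: channels of `W` admitting a path to `t`
whose tail avoids `W`. -/
def BOf (W : Set G.E) : Set G.E :=
  {d | d ∈ W ∧ ∃ p, G.PFrom t d p ∧ ∀ x ∈ p.tail, x ∉ W}

noncomputable def bCut (W : Set G.E) : Finset G.E := (Set.toFinite (G.BOf t W)).toFinset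

variable {G t}

lemma mem_bCut {W : Set G.E} {d : G.E} : d ∈ G.bCut t W ↔ d ∈ G.BOf t W :=
  Set.Finite.mem_toFinset _

lemma cutF_iff_subset_WOf {ρ C : Finset G.E} : G.CutF t ρ C ↔ ↑ρ ⊆ G.WOf t C :=
  Iff.rfl

lemma coe_subset_WOf {C : Finset G.E} : ↑C ⊆ G.WOf t C := by
  intro d hd p hp
  exact ⟨d, List.mem_of_mem_head? (by rw [hp.2.1]; rfl), hd⟩

lemma satur_WOf (C : Finset G.E) : G.Satur t (G.WOf t C) := by
  intro d hd
  have : ∃ p, G.PFrom t d p ∧ ∀ c ∈ p, c ∉ C := by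
    by_contra h
    push_neg at h
    exact hd (fun p hp => h p hp)
  obtain ⟨p, hp, hfree⟩ := this
  refine ⟨p, hp, ?_⟩
  intro x hx hxW
  obtain ⟨q, r, rfl⟩ := List.append_of_mem hx
  obtain ⟨d', hd', hpf⟩ := pfrom_suffix hp rfl (by simp)
  simp at hd'
  subst hd'
  obtain ⟨c, hc1, hc2⟩ := hxW _ hpf
  exact hfree c (List.mem_append_right q hc1) hc2

lemma bOf_WOf_subset (C : Finset G.E) : G.BOf t (G.WOf t C) ⊆ ↑C := by
  rintro d ⟨hdW, p, hp, htail⟩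
  obtain ⟨q, rfl⟩ := pfrom_cons hp
  obtain ⟨c, hc1, hc2⟩ := hdW _ hp
  rcases List.mem_cons.1 hc1 with rfl | hc1
  · exact hc2
  · exact absurd (coe_subset_WOf hc2) (htail c hc1)

lemma cutF_bCut {ρ : Finset G.E} {W : Set G.E} (h : ↑ρ ⊆ W) : G.CutF t ρ (G.bCut t W) := by
  intro e he p hp
  obtain ⟨q, d, r, hpqr, hdW, hr⟩ :=
    last_mem_split (P := fun x => x ∈ W) p
      ⟨e, List.mem_of_mem_head? (by rw [hp.2.1]; rfl), h he⟩
  obtain ⟨d', hd', hpf⟩ := pfrom_suffix hp hpqr (by simp)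
  simp at hd'
  subst hd'
  refine ⟨d, by rw [hpqr]; exact List.mem_append_right q (by simp), ?_⟩
  exact mem_bCut.2 ⟨hdW, d :: r, hpf, hr⟩

/-- key splicing step for the uncrossing argument. -/
lemma bOf_splice {W' : Set G.E} (hsat : G.Satur t W') {d x : G.E} {q₁ q₂ : List G.E}
    (hdW : d ∈ W') (hp : G.PFrom t d (d :: (q₁ ++ x :: q₂)))
    (hq₁ : ∀ y ∈ q₁, y ∉ W') (hx : x ∉ W') : d ∈ G.BOf t W' := by
  obtain ⟨r, hpr, hrfree⟩ := hsat x hx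
  obtain ⟨r', rfl⟩ := pfrom_cons hpr
  refine ⟨hdW, (d :: q₁) ++ (x :: r'), ?_, ?_⟩
  · obtain ⟨hc, hh, hl⟩ := hp
    have hc' : List.Chain' (fun a b => G.hd a = G.tl b) ((d :: q₁) ++ (x :: q₂)) := by
      simpa [ChainsTo] using hc
    unfold List.Chain' at hc'; rw [List.isChain_append] at hc'
    refine ⟨?_, ?_, ?_⟩
    · exact List.isChain_append.2 ⟨hc'.1, hpr.1, fun a ha b hb => hc'.2.2 a ha b (by
        simp at hb ⊢; exact hb)⟩
    · simp
    · obtain ⟨l, hl1, hl2⟩ := hpr.2.2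
      refine ⟨l, ?_, hl2⟩
      rwa [List.getLast?_append_of_ne_nil _ (by simp : (x :: r') ≠ [])]
  · intro y hy
    have : y ∈ q₁ ++ (x :: r') := by simpa using hy
    rcases List.mem_append.1 this with hy1 | hy2
    · exact hq₁ y hy1
    · exact hrfree y hy2

lemma bOf_union_subset (W₁ W₂ : Set G.E) :
    G.BOf t (W₁ ∪ W₂) ⊆ G.BOf t W₁ ∪ G.BOf t W₂ := by
  rintro d ⟨hdW, p, hp, htail⟩
  rcases hdW with h | h
  · exact Or.inl ⟨h, p, hp, fun x hx => fun hxW => htail x hx (Or.inl hxW)⟩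
  · exact Or.inr ⟨h, p, hp, fun x hx => fun hxW => htail x hx (Or.inr hxW)⟩

lemma bOf_inter_subset {W₁ W₂ : Set G.E} (h1 : G.Satur t W₁) (h2 : G.Satur t W₂) :
    G.BOf t (W₁ ∩ W₂) ⊆ G.BOf t W₁ ∪ G.BOf t W₂ := by
  rintro d ⟨hdW, p, hp, htail⟩
  obtain ⟨q, rfl⟩ := pfrom_cons hp
  by_cases hq : ∃ x ∈ q, x ∈ W₁ ∪ W₂
  · obtain ⟨q₁, x, q₂, rfl, hxW, hq₁⟩ := first_mem_split (P := fun x => x ∈ W₁ ∪ W₂) q hq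
    have hxq : x ∈ q₁ ++ x :: q₂ := List.mem_append_right q₁ (by simp)
    have hxnotboth : x ∉ W₁ ∩ W₂ := htail x (by simpa using hxq)
    rcases hxW with hx1 | hx2
    · -- x ∈ W₁, x ∉ W₂ : splice to show d ∈ BOf W₂
      have hx2 : x ∉ W₂ := fun h => hxnotboth ⟨hx1, h⟩
      exact Or.inr (bOf_splice h2 hdW.2 hp (fun y hy hyW => hq₁ y hy (Or.inr hyW)) hx2)
    · have hx1 : x ∉ W₁ := fun h => hxnotboth ⟨h, hx2⟩
      exact Or.inl (bOf_splice h1 hdW.1 hp (fun y hy hyW => hq₁ y hy (Or.inl hyW)) hx1)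
  · push_neg at hq
    exact Or.inl ⟨hdW.1, d :: q, hp, fun x hx hxW => hq x (by simpa using hx) (Or.inl hxW)⟩

lemma bCut_uncross {W₁ W₂ : Set G.E} (h1 : G.Satur t W₁) (h2 : G.Satur t W₂) :
    (G.bCut t (W₁ ∪ W₂)).card + (G.bCut t (W₁ ∩ W₂)).card ≤
      (G.bCut t W₁).card + (G.bCut t W₂).card := by
  set A := G.bCut t (W₁ ∪ W₂)
  set B := G.bCut t (W₁ ∩ W₂)
  set A' := G.bCut t W₁
  set B' := G.bCut t W₂
  have hU : A ∪ B ⊆ A' ∪ B' := by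
    intro d hd
    rcases Finset.mem_union.1 hd with hd | hd
    · rcases bOf_union_subset W₁ W₂ (mem_bCut.1 hd) with h | h
      · exact Finset.mem_union_left _ (mem_bCut.2 h)
      · exact Finset.mem_union_right _ (mem_bCut.2 h)
    · rcases bOf_inter_subset h1 h2 (mem_bCut.1 hd) with h | h
      · exact Finset.mem_union_left _ (mem_bCut.2 h)
      · exact Finset.mem_union_right _ (mem_bCut.2 h)
  have hI : A ∩ B ⊆ A' ∩ B' := by
    intro d hd
    obtain ⟨hdA, hdB⟩ := Finset.mem_inter.1 hd
    obtain ⟨hdW, p, hp, htail⟩ := mem_bCut.1 hdA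
    obtain ⟨hdW', -⟩ := mem_bCut.1 hdB
    refine Finset.mem_inter.2 ⟨mem_bCut.2 ⟨hdW'.1, p, hp, fun x hx hxW => htail x hx (Or.inl hxW)⟩,
      mem_bCut.2 ⟨hdW'.2, p, hp, fun x hx hxW => htail x hx (Or.inr hxW)⟩⟩
  calc A.card + B.card = (A ∪ B).card + (A ∩ B).card := (Finset.card_union_add_card_inter A B).symm
    _ ≤ (A' ∪ B').card + (A' ∩ B').card :=
        Nat.add_le_add (Finset.card_le_card hU) (Finset.card_le_card hI)
    _ = A'.card + B'.card := Finset.card_union_add_card_inter A' B'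

theorem rank_submod (A B : Finset G.E) :
    G.rankOf t (A ∪ B) + G.rankOf t (A ∩ B) ≤ G.rankOf t A + G.rankOf t B := by
  obtain ⟨C, hC, hCcard⟩ := exists_min_cut (t := t) A
  obtain ⟨D, hD, hDcard⟩ := exists_min_cut (t := t) B
  set W₁ := G.WOf t C
  set W₂ := G.WOf t D
  have hA : ↑A ⊆ W₁ := cutF_iff_subset_WOf.1 hC
  have hB : ↑B ⊆ W₂ := cutF_iff_subset_WOf.1 hD
  have hu : G.rankOf t (A ∪ B) ≤ (G.bCut t (W₁ ∪ W₂)).card := by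
    apply rank_le_of_cut
    apply cutF_bCut
    intro e he
    rcases Finset.mem_union.1 (by exact_mod_cast he) with h | h
    · exact Or.inl (hA h)
    · exact Or.inr (hB h)
  have hi : G.rankOf t (A ∩ B) ≤ (G.bCut t (W₁ ∩ W₂)).card := by
    apply rank_le_of_cut
    apply cutF_bCut
    intro e he
    have he' : e ∈ A ∩ B := by exact_mod_cast he
    exact ⟨hA (Finset.mem_of_mem_inter_left he'), hB (Finset.mem_of_mem_inter_right he')⟩
  have h1 : (G.bCut t W₁).card ≤ C.card :=
    Finset.card_le_card (fun d hd => bOf_WOf_subset C (mem_bCut.1 hd))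
  have h2 : (G.bCut t W₂).card ≤ D.card :=
    Finset.card_le_card (fun d hd => bOf_WOf_subset D (mem_bCut.1 hd))
  calc G.rankOf t (A ∪ B) + G.rankOf t (A ∩ B)
      ≤ (G.bCut t (W₁ ∪ W₂)).card + (G.bCut t (W₁ ∩ W₂)).card := Nat.add_le_add hu hi
    _ ≤ (G.bCut t W₁).card + (G.bCut t W₂).card := bCut_uncross (satur_WOf C) (satur_WOf D)
    _ ≤ C.card + D.card := Nat.add_le_add h1 h2
    _ = G.rankOf t A + G.rankOf t B := by rw [hCcard, hDcard]

end Network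

namespace Network

variable {G : Network} {t : G.V}

lemma rank_union_eq {ρ S : Finset G.E}
    (h : ∀ e ∈ S, G.rankOf t (insert e ρ) = G.rankOf t ρ) :
    G.rankOf t (ρ ∪ S) = G.rankOf t ρ := by
  classical
  induction S using Finset.induction_on with
  | empty => rw [Finset.union_empty]
  | @insert a S ha ih =>
    have hS : G.rankOf t (ρ ∪ S) = G.rankOf t ρ :=
      ih (fun e he => h e (Finset.mem_insert_of_mem he))
    have ha' : G.rankOf t (insert a ρ) = G.rankOf t ρ := h a (Finset.mem_insert_self a S)
    have hsub := rank_submod (t := t) (ρ ∪ S) (insert a ρ)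
    have hUnion : (ρ ∪ S) ∪ insert a ρ = ρ ∪ insert a S := by
      ext x; simp [Finset.mem_union, Finset.mem_insert]; tauto
    have hInterSup : ρ ⊆ (ρ ∪ S) ∩ insert a ρ :=
      Finset.subset_inter Finset.subset_union_left (Finset.subset_insert a ρ)
    have h1 : G.rankOf t ρ ≤ G.rankOf t ((ρ ∪ S) ∩ insert a ρ) := rank_mono hInterSup
    have h2 : G.rankOf t ρ ≤ G.rankOf t (ρ ∪ insert a S) :=
      rank_mono Finset.subset_union_left
    rw [hUnion, hS, ha'] at hsub
    omega

theorem card_R_step (m : ℕ) (h : 2 * (m + 1) ≤ G.minCut t) :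
    (G.R t m).ncard ≤ (G.R t (m + 1)).ncard := by
  classical
  set N : Finset G.E := Finset.univ.filter (fun e => G.hd e = t) with hN
  have hn : 2 * (m + 1) ≤ N.card := le_trans h minCut_le_in_t
  set a : Finset (Finset G.E) := (Set.toFinite (G.R t m)).toFinset with haDef
  set b : Finset (Finset G.E) := (Set.toFinite (G.R t (m + 1))).toFinset with hbDef
  have key : ∀ ρ ∈ a, m + 1 ≤ (b.filter (fun σ => ρ ⊆ σ)).card := by
    intro ρ hρ
    rw [haDef, Set.Finite.mem_toFinset] at hρ
    obtain ⟨hc, hr⟩ := hρ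
    set bad : Finset G.E := (N \ ρ).filter (fun e => G.rankOf t (insert e ρ) = m) with hbad
    set good : Finset G.E := (N \ ρ) \ bad with hgood
    have hbadrk : G.rankOf t (ρ ∪ bad) = m := by
      rw [← hr]
      exact rank_union_eq (fun e he => by rw [(Finset.mem_filter.1 he).2, hr])
    -- the finset (ρ ∩ N) ∪ bad is a subset of In(t) contained in ρ ∪ bad
    have hT0N : ∀ e ∈ (ρ ∩ N) ∪ bad, G.hd e = t := by
      intro e he
      rcases Finset.mem_union.1 he with he | he
      · exact (Finset.mem_filter.1 (Finset.mem_of_mem_inter_right he)).2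
      · exact (Finset.mem_filter.1
          (Finset.mem_sdiff.1 (Finset.mem_of_mem_filter e (by exact he))).1).2
    have hT0rk : G.rankOf t ((ρ ∩ N) ∪ bad) = ((ρ ∩ N) ∪ bad).card := rank_in_t hT0N
    have hT0sub : (ρ ∩ N) ∪ bad ⊆ ρ ∪ bad :=
      Finset.union_subset_union Finset.inter_subset_left (le_refl bad)
    have hT0le : ((ρ ∩ N) ∪ bad).card ≤ m := by
      rw [← hT0rk, ← hbadrk]
      exact rank_mono hT0sub
    have hdisj : Disjoint (ρ ∩ N) bad := by
      apply Finset.disjoint_left.2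
      intro e he hbad'
      exact (Finset.mem_sdiff.1 (Finset.mem_of_mem_filter e hbad')).2
        (Finset.mem_of_mem_inter_left he)
    have hT0card : ((ρ ∩ N) ∪ bad).card = (ρ ∩ N).card + bad.card :=
      Finset.card_union_of_disjoint hdisj
    have hbadsub : bad ⊆ N \ ρ := Finset.filter_subset _ _
    have hgcard : good.card + bad.card = (N \ ρ).card := by
      have h' := Finset.card_sdiff_add_card_inter (N \ ρ) bad
      rw [Finset.inter_eq_right.2 hbadsub] at h'
      rw [hgood]
      exact h' 
    have hNsplit : (N \ ρ).card + (N ∩ ρ).card = N.card := Finset.card_sdiff_add_card_inter N ρ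
    have hcomm : (ρ ∩ N).card = (N ∩ ρ).card := by rw [Finset.inter_comm]
    have hgoodcard : m + 1 ≤ good.card := by omega
    -- each good channel extends ρ to an element of R t (m+1)
    have hext : ∀ e ∈ good, e ∉ ρ ∧ insert e ρ ∈ b := by
      intro e he
      obtain ⟨heN, henb⟩ := Finset.mem_sdiff.1 he
      obtain ⟨heN', heρ⟩ := Finset.mem_sdiff.1 heN
      have hne : G.rankOf t (insert e ρ) ≠ m := by
        intro hcontra
        exact henb (Finset.mem_filter.2 ⟨heN, hcontra⟩)
      have hle : G.rankOf t (insert e ρ) ≤ m + 1 := by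
        have := rank_insert_le (t := t) ρ e
        omega
      have hge : m ≤ G.rankOf t (insert e ρ) := by
        rw [← hr]; exact rank_mono (Finset.subset_insert e ρ)
      refine ⟨heρ, (Set.Finite.mem_toFinset _).2 ⟨?_, by omega⟩⟩
      rw [Finset.card_insert_of_notMem heρ, hc]
    calc m + 1 ≤ good.card := hgoodcard
      _ ≤ (b.filter (fun σ => ρ ⊆ σ)).card := by
          apply Finset.card_le_card_of_injOn (fun e => insert e ρ)
          · intro e he
            obtain ⟨heρ, hmem⟩ := hext e he
            exact Finset.mem_filter.2 ⟨hmem, Finset.subset_insert e ρ⟩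
          · intro e he e' he' heq
            have heq' : insert e ρ = insert e' ρ := heq
            have : e ∈ insert e' ρ := heq' ▸ Finset.mem_insert_self e ρ
            rcases Finset.mem_insert.1 this with h' | h'
            · exact h'
            · exact absurd h' (hext e he).1
  have key2 : ∀ σ ∈ b, (a.filter (fun ρ => ρ ⊆ σ)).card ≤ m + 1 := by
    intro σ hσ
    rw [hbDef, Set.Finite.mem_toFinset] at hσ
    obtain ⟨hcσ, -⟩ := hσ
    have hsub : a.filter (fun ρ => ρ ⊆ σ) ⊆ σ.powersetCard m := by
      intro ρ hρ
      obtain ⟨hρa, hρσ⟩ := Finset.mem_filter.1 hρ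
      rw [haDef, Set.Finite.mem_toFinset] at hρa
      obtain ⟨hc, -⟩ := hρa
      exact Finset.mem_powersetCard.2 ⟨hρσ, hc⟩
    calc (a.filter (fun ρ => ρ ⊆ σ)).card ≤ (σ.powersetCard m).card := Finset.card_le_card hsub
      _ = (σ.card).choose m := Finset.card_powersetCard m σ
      _ = m + 1 := by rw [hcσ]; exact Nat.choose_succ_self_right m
  have hsum : ∑ ρ ∈ a, (b.filter (fun σ => ρ ⊆ σ)).card
      = ∑ σ ∈ b, (a.filter (fun ρ => ρ ⊆ σ)).card := by
    simp_rw [Finset.card_filter]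
    rw [Finset.sum_comm]
  have h1 : (m + 1) * a.card ≤ ∑ ρ ∈ a, (b.filter (fun σ => ρ ⊆ σ)).card := by
    calc (m + 1) * a.card = ∑ _ρ ∈ a, (m + 1) := by rw [Finset.sum_const, smul_eq_mul, mul_comm]
      _ ≤ _ := Finset.sum_le_sum key
  have h2 : ∑ σ ∈ b, (a.filter (fun ρ => ρ ⊆ σ)).card ≤ (m + 1) * b.card := by
    calc ∑ σ ∈ b, (a.filter (fun ρ => ρ ⊆ σ)).card ≤ ∑ _σ ∈ b, (m + 1) := Finset.sum_le_sum key2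
      _ = (m + 1) * b.card := by rw [Finset.sum_const, smul_eq_mul, mul_comm]
  have hcard : a.card ≤ b.card := by
    have := le_trans h1 (le_trans (le_of_eq hsum) h2)
    exact Nat.le_of_mul_le_mul_left this (by omega)
  rw [Set.ncard_eq_toFinset_card _ (Set.toFinite (G.R t m)),
    Set.ncard_eq_toFinset_card _ (Set.toFinite (G.R t (m + 1)))]
  exact hcard

end Network


theorem statement9 (G : Network) (t : G.V) (ht : t ∈ G.T) (β δ : ℕ)
    (h1 : β ≤ δ) (h2 : δ ≤ G.minCut t / 2) :
    (G.R t β).ncard ≤ (G.R t δ).ncard := by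
  have main : ∀ d, β ≤ d → d ≤ G.minCut t / 2 → (G.R t β).ncard ≤ (G.R t d).ncard := by
    intro d hd
    induction d, hd using Nat.le_induction with
    | base => intro _; exact le_refl _
    | succ n hn ih =>
      intro hle
      exact le_trans (ih (by omega)) (Network.card_R_step n (by omega))
  exact main δ h1 h2
end

section
/- For all natural numbers β, δ, k, C with β ≤ δ, 2δ ≤ C, and k ≤ C, one has C(C,δ) + C(k,β) ≥ C(C,β) + C(k,δ); equivalently, C(C,δ) − C(k,δ) ≥ C(C,β) − C(k,β) as integers. -/
lemma step10 (j k C : ℕ) (h2 : 2 * (j + 1) ≤ C) (h3 : k ≤ C) :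
    Nat.choose C j + Nat.choose k (j+1) ≤ Nat.choose C (j+1) + Nat.choose k j := by
  rcases le_or_gt k (2*j+1) with hk | hk
  · have hA : Nat.choose C j ≤ Nat.choose C (j+1) := by
      apply Nat.choose_le_succ_of_lt_half_left
      omega
    have hB : Nat.choose k (j+1) ≤ Nat.choose k j := by
      rcases le_or_gt k j with h | h
      · rw [Nat.choose_eq_zero_of_lt (by omega)]
        exact Nat.zero_le _
      · rcases eq_or_lt_of_le hk with hk' | hk'
        · have : k = 2 * j + 1 := hk'
          subst this
          exact le_of_eq (Nat.choose_symm_half j)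
        · have e1 : Nat.choose k (j+1) = Nat.choose k (k - (j+1)) :=
            (Nat.choose_symm (by omega)).symm
          have e2 : Nat.choose k j = Nat.choose k (k - j) := (Nat.choose_symm (by omega)).symm
          have e3 : k - j = (k - (j+1)) + 1 := by omega
          rw [e1, e2, e3]
          apply Nat.choose_le_succ_of_lt_half_left
          omega
    omega
  · have ha : Nat.choose k j ≤ Nat.choose C j := Nat.choose_le_choose j h3
    have key : Nat.choose k j * (k - 2*j - 1) ≤ Nat.choose C j * (C - 2*j - 1) :=
      Nat.mul_le_mul ha (by omega)
    have i1 : Nat.choose C (j+1) * (j+1) = Nat.choose C j * (C - j) :=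
      Nat.choose_succ_right_eq C j
    have i2 : Nat.choose k (j+1) * (j+1) = Nat.choose k j * (k - j) :=
      Nat.choose_succ_right_eq k j
    have goal' : (Nat.choose C j + Nat.choose k (j+1)) * (j+1)
        ≤ (Nat.choose C (j+1) + Nat.choose k j) * (j+1) := by
      rw [Nat.add_mul, Nat.add_mul, i1, i2]
      have e1 : k - j = (k - 2*j - 1) + (j + 1) := by omega
      have e2 : C - j = (C - 2*j - 1) + (j + 1) := by omega
      rw [e1, e2, Nat.mul_add (Nat.choose k j) (k - 2*j - 1) (j+1),
        Nat.mul_add (Nat.choose C j) (C - 2*j - 1) (j+1)]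
      omega
    exact Nat.le_of_mul_le_mul_right goal' (by omega)

theorem statement10 (β δ k C : ℕ) (h1 : β ≤ δ) (h2 : 2 * δ ≤ C) (h3 : k ≤ C) :
    Nat.choose C β + Nat.choose k δ ≤ Nat.choose C δ + Nat.choose k β ∧
    (Nat.choose C β : ℤ) - Nat.choose k β ≤ (Nat.choose C δ : ℤ) - Nat.choose k δ := by
  have main : Nat.choose C β + Nat.choose k δ ≤ Nat.choose C δ + Nat.choose k β := by
    induction δ, h1 using Nat.le_induction with
    | base => omega
    | succ d hd ih =>
      have hs := step10 d k C h2 h3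
      have := ih (by omega)
      omega
  exact ⟨main, by omega⟩
end

section
/- For all natural numbers a, k, C with k ≤ C and 2(a+1) ≤ C, one has C(C,a+1) + C(k,a) ≥ C(C,a) + C(k,a+1); equivalently, C(C,a+1) − C(C,a) ≥ C(k,a+1) − C(k,a) as integers. -/
lemma aux_inc (n a : ℕ) (h : 2 * (a + 1) ≤ n) :
    Nat.choose n a ≤ Nat.choose n (a + 1) := by
  have key := Nat.choose_succ_right_eq n a
  have hle : a + 1 ≤ n - a := by omega
  have : Nat.choose n a * (a + 1) ≤ Nat.choose n (a + 1) * (a + 1) := by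
    calc Nat.choose n a * (a + 1) ≤ Nat.choose n a * (n - a) :=
          Nat.mul_le_mul_left _ hle
      _ = Nat.choose n (a + 1) * (a + 1) := key.symm
  exact Nat.le_of_mul_le_mul_right this (by omega)

lemma aux_dec (k a : ℕ) (h : k ≤ 2 * a + 1) :
    Nat.choose k (a + 1) ≤ Nat.choose k a := by
  have key := Nat.choose_succ_right_eq k a
  have hle : k - a ≤ a + 1 := by omega
  have : Nat.choose k (a + 1) * (a + 1) ≤ Nat.choose k a * (a + 1) := by
    calc Nat.choose k (a + 1) * (a + 1) = Nat.choose k a * (k - a) := key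
      _ ≤ Nat.choose k a * (a + 1) := Nat.mul_le_mul_left _ hle
  exact Nat.le_of_mul_le_mul_right this (by omega)

lemma aux_mono (a m n : ℕ) (hm : 2 * (a + 1) ≤ m) (hmn : m ≤ n) :
    Nat.choose m (a + 1) + Nat.choose n a ≤ Nat.choose n (a + 1) + Nat.choose m a := by
  induction n with
  | zero => omega
  | succ n ih =>
    rcases Nat.lt_or_ge n m with h | h
    · have : m = n + 1 := by omega
      subst this; omega
    · have ih' := ih h
      rw [Nat.choose_succ_succ' n a]
      rcases a with _ | b
      · simp only [Nat.choose_zero_right] at *; omega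
      · have hstep : Nat.choose n b ≤ Nat.choose n (b + 1) :=
          aux_inc n b (by omega)
        have : Nat.choose n ((b + 1) + 1) = Nat.choose (n + 1) (b + 1 + 1) - Nat.choose n (b+1) := by
          rw [Nat.choose_succ_succ' n (b+1)]; omega
        simp only [Nat.choose_succ_succ' n b] at *
        omega

theorem statement11 (a k C : ℕ) (h1 : k ≤ C) (h2 : 2 * (a + 1) ≤ C) :
    Nat.choose C a + Nat.choose k (a + 1) ≤ Nat.choose C (a + 1) + Nat.choose k a ∧
    (Nat.choose k (a + 1) : ℤ) - Nat.choose k a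
      ≤ (Nat.choose C (a + 1) : ℤ) - Nat.choose C a := by
  have main : Nat.choose C a + Nat.choose k (a + 1) ≤ Nat.choose C (a + 1) + Nat.choose k a := by
    rcases Nat.lt_or_ge k (2 * (a + 1)) with h | h
    · have hd := aux_dec k a (by omega)
      have hi := aux_inc C a h2
      omega
    · have := aux_mono a k C h h1
      omega
  refine ⟨main, ?_⟩
  omega
end

section
/- Let F be a finite field and L an n-dimensional vector space over F. Let L_0 and L_1 be subspaces of L of dimensions k_0 and k_1 respectively with L_0 + L_1 = L, and let m = n − k_0. Then the number of m-tuples (l_1, l_2, ..., l_m) ∈ L_1^m such that L_0 + span{l_1, ..., l_m} = L equals Π_{i=1}^{m} (|F|^{k_1} − |F|^{k_1−i}). Equivalently, if l_1, ..., l_m are independently and uniformly distributed random vectors taking values in L_1, then Pr(dim span(L_0 ∪ {l_1, ..., l_m}) = n) = Π_{i=1}^{m} (1 − |F|^{−i}). -/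
private lemma statement12_aux1 (q k1 m : ℕ) (hmk1 : m ≤ k1) :
    (∏ i ∈ Finset.range m, (q ^ m - q ^ i)) * (q ^ (k1 - m)) ^ m
      = ∏ i ∈ Finset.Icc 1 m, (q ^ k1 - q ^ (k1 - i)) := by
  rw [show Finset.Icc 1 m = Finset.Ico 1 (m + 1) from (Finset.Ico_add_one_right_eq_Icc 1 m).symm,
    Finset.prod_Ico_eq_prod_range]
  simp only [Nat.add_sub_cancel]
  have key : ∀ i ∈ Finset.range m,
      q ^ k1 - q ^ (k1 - (1 + i)) = (q ^ m - q ^ (m - 1 - i)) * q ^ (k1 - m) := by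
    intro i hi
    rw [Finset.mem_range] at hi
    have a1 : m + (k1 - m) = k1 := by omega
    have a2 : m - 1 - i + (k1 - m) = k1 - (1 + i) := by omega
    have e1 : q ^ k1 = q ^ m * q ^ (k1 - m) := by rw [← pow_add, a1]
    have e2 : q ^ (k1 - (1 + i)) = q ^ (m - 1 - i) * q ^ (k1 - m) := by
      rw [← pow_add, a2]
    rw [e1, e2, ← Nat.sub_mul]
  rw [Finset.prod_congr rfl key, Finset.prod_mul_distrib, Finset.prod_const,
    Finset.card_range, Finset.prod_range_reflect (fun j => q ^ m - q ^ j) m]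

private lemma statement12_aux2 (q k1 m : ℕ) (hq1 : 1 ≤ q) (hmk1 : m ≤ k1) :
    ((∏ i ∈ Finset.Icc 1 m, (q ^ k1 - q ^ (k1 - i)) : ℕ) : ℝ) / (q : ℝ) ^ (k1 * m)
      = ∏ i ∈ Finset.Icc 1 m, (1 - ((q : ℝ) ^ i)⁻¹) := by
  have hqR : (0 : ℝ) < (q : ℝ) := by exact_mod_cast hq1
  have hcast : ((∏ i ∈ Finset.Icc 1 m, (q ^ k1 - q ^ (k1 - i)) : ℕ) : ℝ)
      = ∏ i ∈ Finset.Icc 1 m, ((q : ℝ) ^ k1 - (q : ℝ) ^ (k1 - i)) := by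
    rw [Nat.cast_prod]
    refine Finset.prod_congr rfl fun i _ => ?_
    rw [Nat.cast_sub (Nat.pow_le_pow_right hq1 (Nat.sub_le _ _))]
    push_cast
    ring
  rw [hcast]
  have hpow : (q : ℝ) ^ (k1 * m) = ∏ _i ∈ Finset.Icc 1 m, (q : ℝ) ^ k1 := by
    rw [Finset.prod_const, Nat.card_Icc, Nat.add_sub_cancel, ← pow_mul]
  rw [hpow, ← Finset.prod_div_distrib]
  refine Finset.prod_congr rfl fun i hi => ?_
  rw [Finset.mem_Icc] at hi
  have hik1 : i ≤ k1 := le_trans hi.2 hmk1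
  have hqk : ((q : ℝ) ^ k1) ≠ 0 := by positivity
  have hqi : ((q : ℝ) ^ i) ≠ 0 := by positivity
  rw [sub_div, div_self hqk]
  have hx : (q : ℝ) ^ (k1 - i) / (q : ℝ) ^ k1 = ((q : ℝ) ^ i)⁻¹ := by
    rw [div_eq_iff hqk, inv_mul_eq_div, eq_div_iff hqi, ← pow_add]
    congr 1
    omega
  rw [hx]

theorem statement12 (F : Type*) [Field F] [Fintype F] (L : Type*) [AddCommGroup L]
    [Module F L] [FiniteDimensional F L] (n k0 k1 m : ℕ)
    (hn : Module.finrank F L = n) (L0 L1 : Submodule F L)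
    (hk0 : Module.finrank F ↥L0 = k0) (hk1 : Module.finrank F ↥L1 = k1)
    (hsum : L0 ⊔ L1 = ⊤) (hm : m = n - k0) :
    Set.ncard {l : Fin m → ↥L1 |
        L0 ⊔ Submodule.span F (Set.range fun i => (l i : L)) = ⊤}
      = ∏ i ∈ Finset.Icc 1 m, (Fintype.card F ^ k1 - Fintype.card F ^ (k1 - i))
    ∧ (Set.ncard {l : Fin m → ↥L1 |
          L0 ⊔ Submodule.span F (Set.range fun i => (l i : L)) = ⊤} : ℝ)
          / (Fintype.card F : ℝ) ^ (k1 * m)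
      = ∏ i ∈ Finset.Icc 1 m, (1 - ((Fintype.card F : ℝ) ^ i)⁻¹) := by
  classical
  have hfin : Finite L := Module.finite_of_finite F
  set q := Fintype.card F with hq
  set f : ↥L1 →ₗ[F] (L ⧸ L0) := L0.mkQ.comp L1.subtype with hf
  have hrange : LinearMap.range f = ⊤ := by
    rw [hf, LinearMap.range_comp, Submodule.range_subtype, Submodule.map_mkQ_eq_top, hsum]
  have hk0n : k0 ≤ n := by rw [← hk0, ← hn]; exact Submodule.finrank_le L0
  have hQ : Module.finrank F (L ⧸ L0) = m := by
    have := Submodule.finrank_quotient_add_finrank L0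
    omega
  have hkerm : Module.finrank F (LinearMap.ker f) = k1 - m ∧ m ≤ k1 := by
    have h1 := LinearMap.finrank_range_add_finrank_ker f
    rw [hrange, finrank_top, hQ, hk1] at h1
    omega
  have hmk1 : m ≤ k1 := hkerm.2
  -- the defining condition is equivalent to linear independence in the quotient
  have hset : ∀ l : Fin m → ↥L1,
      (L0 ⊔ Submodule.span F (Set.range fun i => (l i : L)) = ⊤) ↔
        LinearIndependent F (f ∘ l) := by
    intro l
    have hmap : Submodule.map L0.mkQ (Submodule.span F (Set.range fun i => (l i : L))) =
        Submodule.span F (Set.range (f ∘ l)) := by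
      rw [Submodule.map_span, ← Set.range_comp]
      rfl
    constructor
    · intro h
      have htop : Submodule.span F (Set.range (f ∘ l)) = ⊤ := by
        rw [← hmap, Submodule.map_mkQ_eq_top]
        exact h
      apply linearIndependent_iff_card_eq_finrank_span.mpr
      rw [Set.finrank, htop, finrank_top, hQ, Fintype.card_fin]
    · intro h
      rw [← Submodule.map_mkQ_eq_top, hmap]
      apply Submodule.eq_top_of_finrank_eq
      rw [finrank_span_eq_card h, Fintype.card_fin, hQ]
  -- a right inverse of f
  obtain ⟨g, hg⟩ := f.exists_rightInverse_of_surjective hrange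
  have hgf : ∀ x, f (g x) = x := fun x => by
    have := LinearMap.ext_iff.mp hg x
    simpa using this
  -- split the tuples
  have E : {l : Fin m → ↥L1 // LinearIndependent F (f ∘ l)} ≃
      {s : Fin m → (L ⧸ L0) // LinearIndependent F s} × (Fin m → LinearMap.ker f) :=
    { toFun := fun l => (⟨f ∘ l.1, l.2⟩, fun i => ⟨l.1 i - g (f (l.1 i)), by
        simp [LinearMap.mem_ker, map_sub, hgf]⟩)
      invFun := fun p => ⟨fun i => g (p.1.1 i) + (p.2 i : ↥L1), by
        have heq : f ∘ (fun i => g (p.1.1 i) + (p.2 i : ↥L1)) = p.1.1 := by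
          funext i
          have h0 : f (p.2 i : ↥L1) = 0 := (p.2 i).2
          simp [map_add, hgf, h0]
        rw [heq]; exact p.1.2⟩
      left_inv := fun l => by
        apply Subtype.ext
        funext i
        simp
      right_inv := fun p => by
        have h0 : ∀ i, f (p.2 i : ↥L1) = 0 := fun i => (p.2 i).2
        refine Prod.ext (Subtype.ext ?_) ?_
        · funext i
          simp [map_add, hgf, h0]
        · funext i
          apply Subtype.ext
          simp [map_add, hgf, h0] }
  -- counting
  have hcardker : Nat.card (LinearMap.ker f) = q ^ (k1 - m) := by
    haveI : Fintype (LinearMap.ker f) := Fintype.ofFinite _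
    rw [Nat.card_eq_fintype_card, Module.card_eq_pow_finrank (K := F) (V := LinearMap.ker f), hkerm.1]
  haveI : Finite (L ⧸ L0) := Quotient.finite _
  have hcardLI : Nat.card {s : Fin m → (L ⧸ L0) // LinearIndependent F s} =
      ∏ i : Fin m, (q ^ m - q ^ i.1) := by
    have := card_linearIndependent (K := F) (V := L ⧸ L0) (k := m) (by rw [hQ])
    rw [hQ] at this
    exact this
  have hN : Set.ncard {l : Fin m → ↥L1 |
      L0 ⊔ Submodule.span F (Set.range fun i => (l i : L)) = ⊤}
      = (∏ i : Fin m, (q ^ m - q ^ i.1)) * (q ^ (k1 - m)) ^ m := by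
    rw [← Nat.card_coe_set_eq]
    have hSeq : {l : Fin m → ↥L1 |
        L0 ⊔ Submodule.span F (Set.range fun i => (l i : L)) = ⊤}
        = {l : Fin m → ↥L1 | LinearIndependent F (f ∘ l)} := Set.ext hset
    rw [hSeq]
    have : Nat.card {l : Fin m → ↥L1 | LinearIndependent F (f ∘ l)}
        = Nat.card ({s : Fin m → (L ⧸ L0) // LinearIndependent F s} × (Fin m → LinearMap.ker f)) :=
      Nat.card_congr E
    rw [this, Nat.card_prod, hcardLI, Nat.card_fun, hcardker, Nat.card_eq_fintype_card,
      Fintype.card_fin]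
  -- arithmetic identity over ℕ
  have harith : (∏ i : Fin m, (q ^ m - q ^ i.1)) * (q ^ (k1 - m)) ^ m
      = ∏ i ∈ Finset.Icc 1 m, (q ^ k1 - q ^ (k1 - i)) := by
    rw [Fin.prod_univ_eq_prod_range (fun j => q ^ m - q ^ j) m]
    exact statement12_aux1 q k1 m hmk1
  have part1 : Set.ncard {l : Fin m → ↥L1 |
      L0 ⊔ Submodule.span F (Set.range fun i => (l i : L)) = ⊤}
      = ∏ i ∈ Finset.Icc 1 m, (q ^ k1 - q ^ (k1 - i)) := by rw [hN, harith]
  refine ⟨part1, ?_⟩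
  rw [part1]
  exact statement12_aux2 q k1 m Fintype.card_pos hmk1
end
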